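/- If δ is a Woodin for strong compactness cardinal, then δ is an inaccessible cardinal and δ is a limit of <δ-strongly compact cardinals. -/

import Mathlib

/-!
A framework for formalizing large-cardinal notions from
"Woodin for strong compactness cardinals" over the Mathlib model `ZFSet`
of ZFC.  The ambient set-theoretic universe `V` is the type `ZFSet`;
classes are sets `Set ZFSet`; everything is relativised to a "universe
class" `W : Set ZFSet` (the ambient universe being `W = Set.univ`), so
that the same definitions can also be interpreted inside transitive set
models of ZFC (used to express the forcing/consistency results).
-/

namespace WSC

/-! ### First-order formulas in the language of set theory -/

/-- First-order formulas in the language `{∈}`, with `n` free (de Bruijn) variables. -/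
inductive Fml : ℕ → Type where
  | mem {n} : Fin n → Fin n → Fml n
  | eq  {n} : Fin n → Fin n → Fml n
  | not {n} : Fml n → Fml n
  | and {n} : Fml n → Fml n → Fml n
  | ex  {n} : Fml (n + 1) → Fml n

namespace Fml

/-- Realization of a formula over the class `C`, with all quantifiers relativised to `C`. -/
def Realize (C : Set ZFSet) : ∀ {n}, Fml n → (Fin n → ZFSet) → Prop
  | _, .mem i j, v => v i ∈ v j
  | _, .eq i j, v => v i = v j
  | _, .not φ, v => ¬ Realize C φ v
  | _, .and φ ψ, v => Realize C φ v ∧ Realize C ψ v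
  | _, .ex φ, v => ∃ x ∈ C, Realize C φ (Fin.snoc v x)

def or {n} (φ ψ : Fml n) : Fml n := .not (.and (.not φ) (.not ψ))
def imp {n} (φ ψ : Fml n) : Fml n := Fml.or (.not φ) ψ
def iff {n} (φ ψ : Fml n) : Fml n := .and (imp φ ψ) (imp ψ φ)
def all {n} (φ : Fml (n + 1)) : Fml n := .not (.ex (.not φ))

/-- Universal closure. -/
def alls : ∀ {n}, Fml n → Fml 0
  | 0, φ => φ
  | _ + 1, φ => alls (all φ)

/-- Renaming of variables. -/
def rename : ∀ {n m}, (Fin n → Fin m) → Fml n → Fml m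
  | _, _, f, .mem i j => .mem (f i) (f j)
  | _, _, f, .eq i j => .eq (f i) (f j)
  | _, _, f, .not φ => .not (rename f φ)
  | _, _, f, .and φ ψ => .and (rename f φ) (rename f ψ)
  | _, _, f, .ex φ => .ex (rename (Fin.snoc (fun i => (f i).castSucc) (Fin.last _)) φ)

end Fml

/-- A sentence `φ` holds in the class `C`. -/
def Sat (C : Set ZFSet) (φ : Fml 0) : Prop := Fml.Realize C φ (fun i => i.elim0)

/-! ### The ZFC axioms -/

def extAx : Fml 0 :=
  Fml.all (Fml.all (Fml.imp (Fml.all (Fml.iff (.mem 2 0) (.mem 2 1))) (.eq 0 1)))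

def pairAx : Fml 0 := Fml.all (Fml.all (Fml.ex (Fml.and (.mem 0 2) (.mem 1 2))))

def unionAx : Fml 0 :=
  Fml.all (Fml.ex (Fml.all (Fml.all
    (Fml.imp (Fml.and (.mem 2 3) (.mem 3 0)) (.mem 2 1)))))

def powerAx : Fml 0 :=
  Fml.all (Fml.ex (Fml.all
    (Fml.imp (Fml.all (Fml.imp (.mem 3 2) (.mem 3 0))) (.mem 2 1))))

def infAx : Fml 0 :=
  Fml.ex (Fml.and
    (Fml.ex (Fml.and (.mem 1 0) (Fml.all (Fml.not (.mem 2 1)))))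
    (Fml.all (Fml.imp (.mem 1 0)
      (Fml.ex (Fml.and (.mem 2 0)
        (Fml.all (Fml.iff (.mem 3 2) (Fml.or (.mem 3 1) (.eq 3 1)))))))))

def foundAx : Fml 0 :=
  Fml.all (Fml.imp (Fml.ex (.mem 1 0))
    (Fml.ex (Fml.and (.mem 1 0) (Fml.all (Fml.imp (.mem 2 1) (Fml.not (.mem 2 0)))))))

def choiceAx : Fml 0 :=
  Fml.all (Fml.imp
    (Fml.and
      (Fml.all (Fml.imp (.mem 1 0) (Fml.ex (.mem 2 1))))
      (Fml.all (Fml.all (Fml.imp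
        (Fml.and (.mem 1 0) (Fml.and (.mem 2 0) (Fml.ex (Fml.and (.mem 3 1) (.mem 3 2)))))
        (.eq 1 2)))))
    (Fml.ex (Fml.all (Fml.imp (.mem 2 0)
      (Fml.ex (Fml.and (Fml.and (.mem 3 2) (.mem 3 1))
        (Fml.all (Fml.imp (Fml.and (.mem 4 2) (.mem 4 1)) (.eq 4 3)))))))))

/-- An instance of the separation schema, for a formula `φ` with parameters
`0, …, n-1` and distinguished variable `n`. -/
def sepAx (n : ℕ) (φ : Fml (n + 1)) : Fml 0 :=
  Fml.alls ((Fml.ex (Fml.all (Fml.iff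
    (Fml.mem (⟨n + 2, by omega⟩ : Fin (n + 3)) ⟨n + 1, by omega⟩)
    (Fml.and (Fml.mem (⟨n + 2, by omega⟩ : Fin (n + 3)) ⟨n, by omega⟩)
      (Fml.rename (fun i => if h : (i : ℕ) < n then (⟨i, by omega⟩ : Fin (n + 3))
        else ⟨n + 2, by omega⟩) φ))))) : Fml (n + 1))

/-- An instance of the collection schema, for a formula `φ` with parameters
`0, …, n-1` and distinguished variables `n` (input) and `n+1` (output). -/
def collAx (n : ℕ) (φ : Fml (n + 2)) : Fml 0 :=
  let φ' : Fml (n + 4) := Fml.rename (fun i => if h : (i : ℕ) < n then (⟨i, by omega⟩ : Fin (n + 4))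
    else ⟨(i : ℕ) + 2, by have := i.isLt; omega⟩) φ
  Fml.alls ((Fml.ex (Fml.all
    (Fml.imp (Fml.mem (⟨n + 2, by omega⟩ : Fin (n + 3)) ⟨n, by omega⟩)
      (Fml.imp (Fml.ex φ')
        (Fml.ex (Fml.and (Fml.mem (⟨n + 3, by omega⟩ : Fin (n + 4)) ⟨n + 1, by omega⟩) φ')))))) : Fml (n + 1))

/-- The ZFC axioms. -/
def ZFCax : Set (Fml 0) :=
  {extAx, pairAx, unionAx, powerAx, infAx, foundAx, choiceAx} ∪
    (⋃ n, Set.range (sepAx n)) ∪ (⋃ n, Set.range (collAx n))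

/-- A transitive set model of ZFC. -/
def IsZFModel (m : ZFSet) : Prop := m.IsTransitive ∧ ∀ φ ∈ ZFCax, Sat m.toSet φ

/-- A countable transitive model of ZFC. -/
def IsCtm (m : ZFSet) : Prop := IsZFModel m ∧ m.toSet.Countable

/-! ### Basic set-theoretic notions -/

/-- `x` is a (von Neumann) ordinal: a transitive set of transitive sets. -/
def IsOrd (x : ZFSet) : Prop := x.IsTransitive ∧ ∀ y ∈ x, ZFSet.IsTransitive y

/-- `x ≤ y` for ordinals. -/
def oLe (x y : ZFSet) : Prop := x ∈ y ∨ x = y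

/-- `f` is a function with domain `d` (coded as a set of Kuratowski pairs). -/
def IsFuncOn (d f : ZFSet) : Prop :=
  (∀ p ∈ f, ∃ a b : ZFSet, a ∈ d ∧ p = a.pair b) ∧ ∀ a ∈ d, ∃! b : ZFSet, a.pair b ∈ f

/-- All values of the (partial) function `f` lie in `b`. -/
def MapsInto (f b : ZFSet) : Prop := ∀ x y : ZFSet, x.pair y ∈ f → y ∈ b

/-- The function `f` is injective. -/
def InjFun (f : ZFSet) : Prop := ∀ x x' y : ZFSet, x.pair y ∈ f → x'.pair y ∈ f → x = x'

/-- `|a| ≤ |b|`, witnessed by an injection belonging to the universe class `W`. -/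
def SetLeIn (W : Set ZFSet) (a b : ZFSet) : Prop :=
  ∃ f ∈ W, IsFuncOn a f ∧ MapsInto f b ∧ InjFun f

/-- `κ` is a cardinal (relative to the universe class `W`). -/
def IsCardIn (W : Set ZFSet) (κ : ZFSet) : Prop :=
  IsOrd κ ∧ ∀ α ∈ κ, ¬ SetLeIn W κ α

/-- `M` is a transitive class. -/
def TransClass (M : Set ZFSet) : Prop := ∀ x ∈ M, ∀ y : ZFSet, y ∈ x → y ∈ M

/-- An elementary embedding `j : (W, ∈) → (M, ∈)` between two classes. -/
structure ElemEmb (W M : Set ZFSet) where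
  toFun : ZFSet → ZFSet
  maps : ∀ x ∈ W, toFun x ∈ M
  elem : ∀ {n : ℕ} (φ : Fml n) (v : Fin n → ZFSet), (∀ i, v i ∈ W) →
    (Fml.Realize W φ v ↔ Fml.Realize M φ (fun i => toFun (v i)))

/-- `κ` is the critical point of `j`: the least ordinal moved. -/
def IsCrit {W M : Set ZFSet} (j : ElemEmb W M) (κ : ZFSet) : Prop :=
  IsOrd κ ∧ j.toFun κ ≠ κ ∧ ∀ α ∈ κ, j.toFun α = α

/-! ### The rank hierarchy -/

/-- `x ∈ V_lam`. -/
def VMem (lam x : ZFSet) : Prop := x.rank < lam.rank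

/-- `V_lam ⊆ M` (with `V_lam` computed in the universe class `W`). -/
def VInclIn (W M : Set ZFSet) (lam : ZFSet) : Prop := ∀ x ∈ W, VMem lam x → x ∈ M

/-- `A ⊆ V_δ`. -/
def SubV (A δ : ZFSet) : Prop := ∀ x ∈ A, VMem δ x

/-- `A ∩ V_lam = B ∩ V_lam`. -/
def AgreeBelowIn (W : Set ZFSet) (lam A B : ZFSet) : Prop :=
  ∀ x ∈ W, VMem lam x → (x ∈ A ↔ x ∈ B)

/-- `A ∩ lam = B ∩ lam` (for sets of ordinals). -/
def AgreeMem (lam A B : ZFSet) : Prop := ∀ ξ ∈ lam, (ξ ∈ A ↔ ξ ∈ B)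

/-! ### Covering properties -/

/-- `M ⊨ |s| < t`: in `M` there is an injection of `s` into some ordinal `β ∈ t`. -/
def CardLtIn (M : Set ZFSet) (s t : ZFSet) : Prop :=
  ∃ β f : ZFSet, β ∈ t ∧ f ∈ M ∧ IsFuncOn s f ∧ MapsInto f β ∧ InjFun f

/-- `j` satisfies the weak `lam`-covering property (with target class `M`):
there is `s ∈ M` with `j '' lam ⊆ s` and `M ⊨ |s| < j κ`. -/
def WCovers (M : Set ZFSet) (j : ZFSet → ZFSet) (κ lam : ZFSet) : Prop :=
  ∃ s ∈ M, (∀ α ∈ lam, j α ∈ s) ∧ CardLtIn M s (j κ)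

/-- `j` satisfies the (full) `lam`-covering property: every `X ∈ W` with
`X ⊆ M` and `|X| ≤ lam` is covered by some `s ∈ M` with `M ⊨ |s| < j κ`. -/
def CoversIn (W M : Set ZFSet) (j : ZFSet → ZFSet) (κ lam : ZFSet) : Prop :=
  ∀ X ∈ W, X.toSet ⊆ M → SetLeIn W X lam → ∃ s ∈ M, X ⊆ s ∧ CardLtIn M s (j κ)

/-! ### Strongness -/

/-- `κ` is `lam`-strong. -/
def LamStrongIn (W : Set ZFSet) (κ lam : ZFSet) : Prop :=
  ∃ M : Set ZFSet, M ⊆ W ∧ TransClass M ∧ ∃ j : ElemEmb W M,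
    IsCrit j κ ∧ lam ∈ j.toFun κ ∧ VInclIn W M lam

/-- `κ` is `lam`-strong for `A`. -/
def LamStrongForIn (W : Set ZFSet) (κ lam A : ZFSet) : Prop :=
  ∃ M : Set ZFSet, M ⊆ W ∧ TransClass M ∧ ∃ j : ElemEmb W M,
    IsCrit j κ ∧ lam ∈ j.toFun κ ∧ VInclIn W M lam ∧ AgreeBelowIn W lam A (j.toFun A)

/-- `κ` is `<δ`-strong. -/
def LtStrongIn (W : Set ZFSet) (κ δ : ZFSet) : Prop :=
  ∀ lam : ZFSet, oLe κ lam → lam ∈ δ → LamStrongIn W κ lam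

/-- `κ` is `<δ`-strong for `A`. -/
def LtStrongForIn (W : Set ZFSet) (κ δ A : ZFSet) : Prop :=
  ∀ lam : ZFSet, oLe κ lam → lam ∈ δ → LamStrongForIn W κ lam A

/-! ### Strong compactness -/

/-- `κ` is `lam`-strongly compact (there is an embedding with critical point `κ`,
`j κ > lam`, satisfying the weak `lam`-covering property). -/
def LamSCIn (W : Set ZFSet) (κ lam : ZFSet) : Prop :=
  ∃ M : Set ZFSet, M ⊆ W ∧ TransClass M ∧ ∃ j : ElemEmb W M,
    IsCrit j κ ∧ lam ∈ j.toFun κ ∧ WCovers M j.toFun κ lam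

/-- `κ` is `lam`-strongly compact for the set of ordinals `A`: there is a
`lam`-strong compactness embedding `j` (one with the full `lam`-covering
property) with critical point `κ` and `A ∩ lam = j A ∩ lam`. -/
def LamSCForIn (W : Set ZFSet) (κ lam A : ZFSet) : Prop :=
  ∃ M : Set ZFSet, M ⊆ W ∧ TransClass M ∧ ∃ j : ElemEmb W M,
    IsCrit j κ ∧ lam ∈ j.toFun κ ∧ CoversIn W M j.toFun κ lam ∧ AgreeMem lam A (j.toFun A)

/-- `κ` is `<δ`-strongly compact. -/
def LtSCIn (W : Set ZFSet) (κ δ : ZFSet) : Prop :=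
  ∀ lam : ZFSet, oLe κ lam → lam ∈ δ → LamSCIn W κ lam

/-- `κ` is `<δ`-strongly compact for `A`. -/
def LtSCForIn (W : Set ZFSet) (κ δ A : ZFSet) : Prop :=
  ∀ lam : ZFSet, oLe κ lam → lam ∈ δ → LamSCForIn W κ lam A

/-! ### Supercompactness -/

/-- `M` is closed under `lam`-sequences (from the universe class `W`). -/
def SeqClosedIn (W M : Set ZFSet) (lam : ZFSet) : Prop :=
  ∀ f ∈ W, IsFuncOn lam f → (∀ x y : ZFSet, x.pair y ∈ f → y ∈ M) → f ∈ M

/-- `κ` is `lam`-supercompact. -/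
def LamSupercompactIn (W : Set ZFSet) (κ lam : ZFSet) : Prop :=
  ∃ M : Set ZFSet, M ⊆ W ∧ TransClass M ∧ ∃ j : ElemEmb W M,
    IsCrit j κ ∧ lam ∈ j.toFun κ ∧ SeqClosedIn W M lam

/-- `κ` is `lam`-supercompact for `A`. -/
def LamSupercompactForIn (W : Set ZFSet) (κ lam A : ZFSet) : Prop :=
  ∃ M : Set ZFSet, M ⊆ W ∧ TransClass M ∧ ∃ j : ElemEmb W M,
    IsCrit j κ ∧ lam ∈ j.toFun κ ∧ SeqClosedIn W M lam ∧ AgreeBelowIn W lam A (j.toFun A)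

/-- `κ` is `<δ`-supercompact. -/
def LtSupercompactIn (W : Set ZFSet) (κ δ : ZFSet) : Prop :=
  ∀ lam : ZFSet, oLe κ lam → lam ∈ δ → LamSupercompactIn W κ lam

/-- `κ` is `<δ`-supercompact for `A`. -/
def LtSupercompactForIn (W : Set ZFSet) (κ δ A : ZFSet) : Prop :=
  ∀ lam : ZFSet, oLe κ lam → lam ∈ δ → LamSupercompactForIn W κ lam A

/-! ### The global large-cardinal notions -/

/-- `δ` is a Woodin cardinal. -/
def WoodinIn (W : Set ZFSet) (δ : ZFSet) : Prop :=
  IsCardIn W δ ∧ ∀ A ∈ W, SubV A δ → ∃ κ, κ ∈ δ ∧ LtStrongForIn W κ δ A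

/-- `δ` is a Woodin for strong compactness cardinal. -/
def WoodinSCIn (W : Set ZFSet) (δ : ZFSet) : Prop :=
  IsCardIn W δ ∧ ∀ A ∈ W, A ⊆ δ → ∃ κ, κ ∈ δ ∧ LtSCForIn W κ δ A

/-- `δ` is a Vopěnka cardinal. -/
def VopenkaIn (W : Set ZFSet) (δ : ZFSet) : Prop :=
  IsCardIn W δ ∧ ∀ A ∈ W, SubV A δ → ∃ κ, κ ∈ δ ∧ LtSupercompactForIn W κ δ A

/-- `δ` is Woodin and a limit of `<δ`-supercompact cardinals. -/
def WoodinLimSupercompactIn (W : Set ZFSet) (δ : ZFSet) : Prop :=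
  WoodinIn W δ ∧ ∀ α ∈ δ, ∃ κ : ZFSet, α ∈ κ ∧ κ ∈ δ ∧ LtSupercompactIn W κ δ

/-! ### Inaccessibility -/

/-- `δ` is a regular ordinal: the range of any function from a smaller
ordinal into `δ` is bounded. -/
def RegularIn (W : Set ZFSet) (δ : ZFSet) : Prop :=
  IsOrd δ ∧ ∀ α ∈ δ, ∀ f ∈ W, IsFuncOn α f → MapsInto f δ →
    ∃ β ∈ δ, ∀ x y : ZFSet, x.pair y ∈ f → y ∈ β

/-- The power set of `x` relative to `W`. -/
def powersetIn (W : Set ZFSet) (x : ZFSet) : ZFSet := ZFSet.sep (fun z => z ∈ W) x.powerset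

/-- `δ` is a strong limit cardinal. -/
def StrongLimitIn (W : Set ZFSet) (δ : ZFSet) : Prop :=
  IsCardIn W δ ∧ ∀ α ∈ δ, ∃ β ∈ δ, SetLeIn W (powersetIn W α) β

/-- `δ` is inaccessible: an uncountable regular strong limit cardinal. -/
def InaccessibleIn (W : Set ZFSet) (δ : ZFSet) : Prop :=
  ZFSet.omega ∈ δ ∧ IsCardIn W δ ∧ RegularIn W δ ∧ StrongLimitIn W δ

/-! ### Ultrafilters and measurability -/

/-- Relative complement `a \ b`. -/
def zdiff (a b : ZFSet) : ZFSet := ZFSet.sep (fun x => x ∉ b) a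

/-- Intersection `a ∩ b`. -/
def zinter (a b : ZFSet) : ZFSet := ZFSet.sep (fun x => x ∈ b) a

/-- `U` is a nonprincipal `α`-complete ultrafilter on `α`. -/
def IsUfOnIn (W : Set ZFSet) (α U : ZFSet) : Prop :=
  (∀ x ∈ U, x ⊆ α) ∧ α ∈ U ∧ (∅ : ZFSet) ∉ U ∧
  (∀ x ∈ U, ∀ y : ZFSet, y ∈ W → y ⊆ α → x ⊆ y → y ∈ U) ∧
  (∀ x ∈ W, x ⊆ α → (x ∈ U ∨ zdiff α x ∈ U)) ∧
  (∀ β ∈ α, ∀ g ∈ W, IsFuncOn β g → MapsInto g U →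
    ZFSet.sep (fun ξ => ∀ p q : ZFSet, p.pair q ∈ g → ξ ∈ q) α ∈ U) ∧
  (∀ ξ ∈ α, ZFSet.sep (fun x => x = ξ) α ∉ U)

/-- `U` is a normal ultrafilter on `α`: a nonprincipal `α`-complete
ultrafilter closed under diagonal intersections. -/
def IsNormalUfOnIn (W : Set ZFSet) (α U : ZFSet) : Prop :=
  IsUfOnIn W α U ∧
    ∀ g ∈ W, IsFuncOn α g → MapsInto g U →
      ZFSet.sep (fun ξ => ∀ p q : ZFSet, p.pair q ∈ g → p ∈ ξ → ξ ∈ q) α ∈ U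

/-- `α` is a measurable cardinal. -/
def MeasurableIn (W : Set ZFSet) (α : ZFSet) : Prop := ∃ U ∈ W, IsUfOnIn W α U

/-! ### Functions `f : δ → δ` and closure points -/

/-- `f` codes a function from `δ` to `δ`. -/
def FuncSelf (δ f : ZFSet) : Prop := IsFuncOn δ f ∧ MapsInto f δ

/-- `κ` is a closure point of `f`, i.e. `f '' κ ⊆ κ`. -/
def ClosurePt (f κ : ZFSet) : Prop := ∀ x y : ZFSet, x.pair y ∈ f → x ∈ κ → y ∈ κ

/-! ### GCH -/

/-- GCH: for every infinite cardinal `κ`, any family of subsets of `κ` has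
size at most `κ` or size at least that of the full power set of `κ`. -/
def GCHIn (W : Set ZFSet) : Prop :=
  ∀ κ ∈ W, IsCardIn W κ → oLe ZFSet.omega κ →
    ∀ X ∈ W, (∀ z ∈ X, z ⊆ κ) → (SetLeIn W X κ ∨ SetLeIn W (powersetIn W κ) X)

/-! ### Forcing -/

/-- `(P, R)` is a forcing notion (a preordered set, `x.pair y ∈ R` meaning
`x ≤ y`, i.e. `x` is stronger than `y`). -/
def IsPoset (P R : ZFSet) : Prop :=
  (∀ p ∈ P, p.pair p ∈ R) ∧
  (∀ p q r : ZFSet, p.pair q ∈ R → q.pair r ∈ R → p.pair r ∈ R) ∧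
  (∀ x y : ZFSet, x.pair y ∈ R → x ∈ P ∧ y ∈ P)

/-- `G` is an `m`-generic filter on the forcing notion `(P, R) ∈ m`. -/
def IsGenericFilter (m P R G : ZFSet) : Prop :=
  G ⊆ P ∧
  (∀ p ∈ G, ∀ q ∈ P, p.pair q ∈ R → q ∈ G) ∧
  (∀ p ∈ G, ∀ q ∈ G, ∃ r ∈ G, r.pair p ∈ R ∧ r.pair q ∈ R) ∧
  (∀ D ∈ m, (D ⊆ P ∧ ∀ p ∈ P, ∃ q ∈ D, q.pair p ∈ R) → ∃ q, q ∈ G ∧ q ∈ D)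

/-- `n = m[G]` : `n` is a transitive ZFC-model extending `m` and containing
`G`, and is the least such. -/
def IsGenericExt (m G n : ZFSet) : Prop :=
  IsZFModel n ∧ m ⊆ n ∧ G ∈ n ∧
    ∀ n' : ZFSet, IsZFModel n' → m ⊆ n' → G ∈ n' → n ⊆ n'

/-- `n` is a (set-)forcing extension of the transitive model `m`. -/
def IsForcingExt (m n : ZFSet) : Prop :=
  ∃ P R G : ZFSet, P ∈ m ∧ R ∈ m ∧ IsPoset P R ∧
    IsGenericFilter m P R G ∧ IsGenericExt m G n

/-! ### Ambient (full-universe) abbreviations -/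

abbrev LamStrong (κ lam : ZFSet) : Prop := LamStrongIn Set.univ κ lam
abbrev LamStrongFor (κ lam A : ZFSet) : Prop := LamStrongForIn Set.univ κ lam A
abbrev LtStrong (κ δ : ZFSet) : Prop := LtStrongIn Set.univ κ δ
abbrev LtStrongFor (κ δ A : ZFSet) : Prop := LtStrongForIn Set.univ κ δ A
abbrev LamSC (κ lam : ZFSet) : Prop := LamSCIn Set.univ κ lam
abbrev LamSCFor (κ lam A : ZFSet) : Prop := LamSCForIn Set.univ κ lam A
abbrev LtSC (κ δ : ZFSet) : Prop := LtSCIn Set.univ κ δ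
abbrev LtSCFor (κ δ A : ZFSet) : Prop := LtSCForIn Set.univ κ δ A
abbrev LamSupercompact (κ lam : ZFSet) : Prop := LamSupercompactIn Set.univ κ lam
abbrev LtSupercompact (κ δ : ZFSet) : Prop := LtSupercompactIn Set.univ κ δ
abbrev Woodin (δ : ZFSet) : Prop := WoodinIn Set.univ δ
abbrev WoodinSC (δ : ZFSet) : Prop := WoodinSCIn Set.univ δ
abbrev Vopenka (δ : ZFSet) : Prop := VopenkaIn Set.univ δ
abbrev IsCard (κ : ZFSet) : Prop := IsCardIn Set.univ κ
abbrev Inaccessible (δ : ZFSet) : Prop := InaccessibleIn Set.univ δ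
abbrev Covers (M : Set ZFSet) (j : ZFSet → ZFSet) (κ lam : ZFSet) : Prop :=
  CoversIn Set.univ M j κ lam
abbrev VIncl (M : Set ZFSet) (lam : ZFSet) : Prop := VInclIn Set.univ M lam
abbrev AgreeBelow (lam A B : ZFSet) : Prop := AgreeBelowIn Set.univ lam A B
abbrev SeqClosed (M : Set ZFSet) (lam : ZFSet) : Prop := SeqClosedIn Set.univ M lam

/-! ### Auxiliary development for the proof -/

section Aux

open ZFSet

/-! #### Ordinal basics -/

/-- Successor of a ZF set. -/
def osucc (x : ZFSet) : ZFSet := insert x x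

lemma mem_osucc {x y : ZFSet} : y ∈ osucc x ↔ y = x ∨ y ∈ x := ZFSet.mem_insert_iff

lemma self_mem_osucc {x : ZFSet} : x ∈ osucc x := ZFSet.mem_insert x x

lemma IsOrd.mem {x y : ZFSet} (h : IsOrd x) (hy : y ∈ x) : IsOrd y :=
  ⟨h.2 y hy, fun z hz => h.2 z (h.1.mem_trans hz hy)⟩

lemma isOrd_empty : IsOrd (∅ : ZFSet) :=
  ⟨ZFSet.isTransitive_empty, fun y hy => absurd hy (ZFSet.notMem_empty y)⟩

lemma IsOrd.osucc {x : ZFSet} (h : IsOrd x) : IsOrd (osucc x) := by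
  constructor
  · intro y hy
    rcases mem_osucc.1 hy with rfl | hy
    · exact fun z hz => mem_osucc.2 (Or.inr hz)
    · exact fun z hz => mem_osucc.2 (Or.inr (h.1.mem_trans hz hy))
  · intro y hy
    rcases mem_osucc.1 hy with rfl | hy
    · exact h.1
    · exact h.2 y hy

theorem ord_trich : ∀ x : ZFSet, IsOrd x → ∀ y : ZFSet, IsOrd y → x ∈ y ∨ x = y ∨ y ∈ x := by
  intro x
  induction x using ZFSet.inductionOn with
  | _ x IHx =>
    intro hx y
    induction y using ZFSet.inductionOn with
    | _ y IHy =>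
      intro hy
      by_cases h1 : x ∈ y
      · exact Or.inl h1
      by_cases h2 : y ∈ x
      · exact Or.inr (Or.inr h2)
      refine Or.inr (Or.inl (ZFSet.ext fun w => ⟨fun hw => ?_, fun hw => ?_⟩))
      · rcases IHx w hw (hx.mem hw) y hy with h | rfl | h
        · exact h
        · exact absurd hw h2
        · exact absurd (hx.1.mem_trans h hw) h2
      · rcases IHy w hw (hy.mem hw) with h | rfl | h
        · exact absurd (hy.1.mem_trans h hw) h1
        · exact absurd hw h1
        · exact h

lemma IsOrd.mem_of_subset_ne {x y : ZFSet} (hx : IsOrd x) (hy : IsOrd y)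
    (hsub : x ⊆ y) (hne : x ≠ y) : x ∈ y := by
  rcases ord_trich x hx y hy with h | h | h
  · exact h
  · exact absurd h hne
  · exact absurd (hsub h) (ZFSet.mem_irrefl y)

lemma oLe_refl (x : ZFSet) : oLe x x := Or.inr rfl

lemma oLe.subset {x y : ZFSet} (h : oLe x y) (hy : IsOrd y) : x ⊆ y := by
  rcases h with h | rfl
  · exact hy.1.subset_of_mem h
  · exact fun _ hz => hz

lemma mem_of_oLe_of_mem {x y z : ZFSet} (h : oLe x y) (hyz : y ∈ z) (hz : IsOrd z) : x ∈ z := by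
  rcases h with h | rfl
  · exact hz.1.mem_trans h hyz
  · exact hyz

lemma oLe_of_not_mem {x y : ZFSet} (hx : IsOrd x) (hy : IsOrd y) (h : y ∉ x) : oLe x y := by
  rcases ord_trich x hx y hy with h' | h' | h'
  · exact Or.inl h'
  · exact Or.inr h'
  · exact absurd h' h

lemma oLe_mem_osucc {x y : ZFSet} (h : oLe x y) : x ∈ osucc y :=
  mem_osucc.2 h.symm

/-! #### The finite ordinals and `omega` -/

/-- The `n`-th von Neumann natural as a `ZFSet`. -/
def natZ : ℕ → ZFSet
  | 0 => ∅
  | n + 1 => insert (natZ n) (natZ n)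

lemma mk_ofNat_eq_natZ : ∀ n : ℕ, ZFSet.mk (PSet.ofNat n) = natZ n
  | 0 => rfl
  | n + 1 => by
    show ZFSet.mk (insert (PSet.ofNat n) (PSet.ofNat n)) = insert (natZ n) (natZ n)
    rw [← mk_ofNat_eq_natZ n]
    rfl

lemma natZ_mem_omega : ∀ n : ℕ, natZ n ∈ ZFSet.omega
  | 0 => ZFSet.omega_zero
  | n + 1 => ZFSet.omega_succ (natZ_mem_omega n)

lemma mem_omega_iff {y : ZFSet} : y ∈ ZFSet.omega ↔ ∃ n : ℕ, y = natZ n := by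
  constructor
  · refine Quotient.inductionOn y ?_
    rintro x ⟨⟨n⟩, h⟩
    exact ⟨n, by rw [← mk_ofNat_eq_natZ n]; exact ZFSet.sound h⟩
  · rintro ⟨n, rfl⟩
    exact natZ_mem_omega n

lemma isOrd_natZ : ∀ n : ℕ, IsOrd (natZ n)
  | 0 => isOrd_empty
  | n + 1 => (isOrd_natZ n).osucc

lemma natZ_subset_omega : ∀ n : ℕ, natZ n ⊆ ZFSet.omega
  | 0 => fun z hz => absurd hz (ZFSet.notMem_empty z)
  | n + 1 => fun z hz => by
    rcases ZFSet.mem_insert_iff.1 hz with rfl | hz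
    · exact natZ_mem_omega n
    · exact natZ_subset_omega n hz

lemma isOrd_omega : IsOrd ZFSet.omega := by
  constructor
  · intro y hy
    obtain ⟨n, rfl⟩ := mem_omega_iff.1 hy
    exact natZ_subset_omega n
  · intro y hy
    obtain ⟨n, rfl⟩ := mem_omega_iff.1 hy
    exact (isOrd_natZ n).1

/-! #### Realization utilities -/

namespace Fml

variable {C : Set ZFSet} {n : ℕ}

lemma realize_mem (i j : Fin n) (v : Fin n → ZFSet) :
    Realize C (.mem i j) v ↔ v i ∈ v j := Iff.rfl

lemma realize_eq (i j : Fin n) (v : Fin n → ZFSet) :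
    Realize C (.eq i j) v ↔ v i = v j := Iff.rfl

lemma realize_not (φ : Fml n) (v : Fin n → ZFSet) :
    Realize C (.not φ) v ↔ ¬ Realize C φ v := Iff.rfl

lemma realize_and (φ ψ : Fml n) (v : Fin n → ZFSet) :
    Realize C (.and φ ψ) v ↔ Realize C φ v ∧ Realize C ψ v := Iff.rfl

lemma realize_ex (φ : Fml (n+1)) (v : Fin n → ZFSet) :
    Realize C (.ex φ) v ↔ ∃ x ∈ C, Realize C φ (Fin.snoc v x) := Iff.rfl

lemma realize_or (φ ψ : Fml n) (v : Fin n → ZFSet) :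
    Realize C (Fml.or φ ψ) v ↔ Realize C φ v ∨ Realize C ψ v := by
  simp only [Fml.or, realize_not, realize_and]; tauto

lemma realize_imp (φ ψ : Fml n) (v : Fin n → ZFSet) :
    Realize C (Fml.imp φ ψ) v ↔ (Realize C φ v → Realize C ψ v) := by
  simp only [Fml.imp, realize_or, realize_not]; tauto

lemma realize_iff (φ ψ : Fml n) (v : Fin n → ZFSet) :
    Realize C (Fml.iff φ ψ) v ↔ (Realize C φ v ↔ Realize C ψ v) := by
  simp only [Fml.iff, realize_imp, realize_and]; tauto

lemma realize_all (φ : Fml (n+1)) (v : Fin n → ZFSet) :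
    Realize C (Fml.all φ) v ↔ ∀ x ∈ C, Realize C φ (Fin.snoc v x) := by
  simp only [Fml.all, realize_not, realize_ex, not_exists, not_and, not_not]

end Fml

/-! #### Upgrade lemmas: relativized extensionality facts become absolute over
transitive classes. -/

section Upgrade

variable {C : Set ZFSet}

lemma transClass_univ : TransClass (Set.univ : Set ZFSet) := fun _ _ _ _ => Set.mem_univ _

lemma TransClass.mem {C : Set ZFSet} (hC : TransClass C) {x y : ZFSet}
    (hx : x ∈ C) (hyx : y ∈ x) : y ∈ C := hC x hx y hyx

lemma upgrade_sub (hC : TransClass C) {x y : ZFSet} (hx : x ∈ C) :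
    (∀ w ∈ C, w ∈ x → w ∈ y) ↔ x ⊆ y :=
  ⟨fun h w hw => h w (hC.mem hx hw) hw, fun h w _ hw => h hw⟩

lemma upgrade_empty (hC : TransClass C) {x : ZFSet} (hx : x ∈ C) :
    (∀ w ∈ C, w ∉ x) ↔ x = ∅ := by
  constructor
  · intro h
    rw [ZFSet.eq_empty]
    intro w hw
    exact h w (hC.mem hx hw) hw
  · rintro rfl w _
    exact ZFSet.notMem_empty w

lemma upgrade_sing (hC : TransClass C) {z a : ZFSet} (hz : z ∈ C) (ha : a ∈ C) :
    (∀ w ∈ C, w ∈ z ↔ w = a) ↔ z = {a} := by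
  constructor
  · intro h
    apply ZFSet.ext; intro w
    rw [ZFSet.mem_singleton]
    constructor
    · intro hw; exact (h w (hC.mem hz hw)).1 hw
    · rintro rfl; exact (h w ha).2 rfl
  · rintro rfl w _
    exact ZFSet.mem_singleton

lemma upgrade_dbl (hC : TransClass C) {z a b : ZFSet} (hz : z ∈ C) (ha : a ∈ C) (hb : b ∈ C) :
    (∀ w ∈ C, w ∈ z ↔ (w = a ∨ w = b)) ↔ z = {a, b} := by
  constructor
  · intro h
    apply ZFSet.ext; intro w
    rw [ZFSet.mem_pair]
    constructor
    · intro hw; exact (h w (hC.mem hz hw)).1 hw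
    · rintro (rfl | rfl)
      · exact (h w ha).2 (Or.inl rfl)
      · exact (h w hb).2 (Or.inr rfl)
  · rintro rfl w _
    exact ZFSet.mem_pair

lemma upgrade_insert (hC : TransClass C) {s a b : ZFSet} (hs : s ∈ C) (ha : a ∈ C) (hb : b ∈ C) :
    (∀ w ∈ C, w ∈ s ↔ (w = a ∨ w ∈ b)) ↔ s = insert a b := by
  constructor
  · intro h
    apply ZFSet.ext; intro w
    rw [ZFSet.mem_insert_iff]
    constructor
    · intro hw; exact (h w (hC.mem hs hw)).1 hw
    · rintro (rfl | hw)
      · exact (h w ha).2 (Or.inl rfl)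
      · exact (h w (hC.mem hb hw)).2 (Or.inr hw)
  · rintro rfl w _
    exact ZFSet.mem_insert_iff

end Upgrade

/-! #### Concrete formulas and their realizations -/

section Formulas

open Fml

variable {C : Set ZFSet} {n : ℕ}

lemma hvSnoc {v : Fin n → ZFSet} {x : ZFSet} (hv : ∀ i, v i ∈ C) (hx : x ∈ C) :
    ∀ i, (Fin.snoc v x : Fin (n+1) → ZFSet) i ∈ C := by
  intro i
  refine Fin.lastCases ?_ (fun i => ?_) i
  · rwa [Fin.snoc_last]
  · rw [Fin.snoc_castSucc]; exact hv i

lemma mem_zpair {w a b : ZFSet} : w ∈ ZFSet.pair a b ↔ w = {a} ∨ w = {a, b} := by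
  simp [ZFSet.pair, ZFSet.mem_pair]

/-- `v i ⊆ v j`. -/
def subFml (i j : Fin n) : Fml n :=
  Fml.all (Fml.imp (.mem (Fin.last n) i.castSucc) (.mem (Fin.last n) j.castSucc))

lemma realize_subFml (hC : TransClass C) {i j : Fin n} {v : Fin n → ZFSet} (hi : v i ∈ C) :
    Realize C (subFml i j) v ↔ v i ⊆ v j := by
  simp only [subFml, realize_all, realize_imp, realize_mem, Fin.snoc_last, Fin.snoc_castSucc]
  exact upgrade_sub hC hi

/-- `v i = ∅`. -/
def emptyFml (i : Fin n) : Fml n :=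
  Fml.all (.not (.mem (Fin.last n) i.castSucc))

lemma realize_emptyFml (hC : TransClass C) {i : Fin n} {v : Fin n → ZFSet} (hi : v i ∈ C) :
    Realize C (emptyFml i) v ↔ v i = ∅ := by
  simp only [emptyFml, realize_all, realize_not, realize_mem, Fin.snoc_last, Fin.snoc_castSucc]
  exact upgrade_empty hC hi

/-- `v s = insert (v a) (v b)`. -/
def insFml (s a b : Fin n) : Fml n :=
  Fml.all (Fml.iff (.mem (Fin.last n) s.castSucc)
    (Fml.or (.eq (Fin.last n) a.castSucc) (.mem (Fin.last n) b.castSucc)))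

lemma realize_insFml (hC : TransClass C) {s a b : Fin n} {v : Fin n → ZFSet}
    (hs : v s ∈ C) (ha : v a ∈ C) (hb : v b ∈ C) :
    Realize C (insFml s a b) v ↔ v s = insert (v a) (v b) := by
  simp only [insFml, realize_all, realize_iff, realize_or, realize_eq, realize_mem,
    Fin.snoc_last, Fin.snoc_castSucc]
  exact upgrade_insert hC hs ha hb

/-- `v z = {v a}`. -/
def eqSingFml (z a : Fin n) : Fml n :=
  Fml.all (Fml.iff (.mem (Fin.last n) z.castSucc) (.eq (Fin.last n) a.castSucc))

lemma realize_eqSingFml (hC : TransClass C) {z a : Fin n} {v : Fin n → ZFSet}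
    (hz : v z ∈ C) (ha : v a ∈ C) :
    Realize C (eqSingFml z a) v ↔ v z = {v a} := by
  simp only [eqSingFml, realize_all, realize_iff, realize_eq, realize_mem,
    Fin.snoc_last, Fin.snoc_castSucc]
  exact upgrade_sing hC hz ha

/-- `v z = {v a, v b}`. -/
def eqDblFml (z a b : Fin n) : Fml n :=
  Fml.all (Fml.iff (.mem (Fin.last n) z.castSucc)
    (Fml.or (.eq (Fin.last n) a.castSucc) (.eq (Fin.last n) b.castSucc)))

lemma realize_eqDblFml (hC : TransClass C) {z a b : Fin n} {v : Fin n → ZFSet}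
    (hz : v z ∈ C) (ha : v a ∈ C) (hb : v b ∈ C) :
    Realize C (eqDblFml z a b) v ↔ v z = {v a, v b} := by
  simp only [eqDblFml, realize_all, realize_iff, realize_or, realize_eq, realize_mem,
    Fin.snoc_last, Fin.snoc_castSucc]
  exact upgrade_dbl hC hz ha hb

/-- `v p = pair (v a) (v b)` (Kuratowski pair). -/
def pairFml (p a b : Fin n) : Fml n :=
  .and (Fml.all (Fml.imp (.mem (Fin.last n) p.castSucc)
      (Fml.or (eqSingFml (Fin.last n) a.castSucc) (eqDblFml (Fin.last n) a.castSucc b.castSucc))))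
    (.and (.ex (.and (.mem (Fin.last n) p.castSucc) (eqSingFml (Fin.last n) a.castSucc)))
      (.ex (.and (.mem (Fin.last n) p.castSucc) (eqDblFml (Fin.last n) a.castSucc b.castSucc))))

lemma realize_pairFml (hC : TransClass C) {p a b : Fin n} {v : Fin n → ZFSet}
    (hv : ∀ i, v i ∈ C) :
    Realize C (pairFml p a b) v ↔ v p = ZFSet.pair (v a) (v b) := by
  have hs : ∀ z, z ∈ C →
      (Realize C (eqSingFml (Fin.last n) a.castSucc) (Fin.snoc v z) ↔ z = {v a}) := by
    intro z hz
    rw [realize_eqSingFml hC (by rwa [Fin.snoc_last]) (by rw [Fin.snoc_castSucc]; exact hv a)]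
    simp only [Fin.snoc_last, Fin.snoc_castSucc]
  have hd : ∀ z, z ∈ C →
      (Realize C (eqDblFml (Fin.last n) a.castSucc b.castSucc) (Fin.snoc v z) ↔
        z = {v a, v b}) := by
    intro z hz
    rw [realize_eqDblFml hC (by rwa [Fin.snoc_last]) (by rw [Fin.snoc_castSucc]; exact hv a)
      (by rw [Fin.snoc_castSucc]; exact hv b)]
    simp only [Fin.snoc_last, Fin.snoc_castSucc]
  simp only [pairFml, realize_and, realize_all, realize_imp, realize_or, realize_ex, realize_mem,
    Fin.snoc_last, Fin.snoc_castSucc]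
  constructor
  · rintro ⟨h1, ⟨z1, hz1C, hz1p, hz1⟩, ⟨z2, hz2C, hz2p, hz2⟩⟩
    rw [hs z1 hz1C] at hz1
    rw [hd z2 hz2C] at hz2
    subst hz1; subst hz2
    apply ZFSet.ext; intro w
    rw [mem_zpair]
    constructor
    · intro hw
      rcases h1 w (hC.mem (hv p) hw) hw with h | h
      · exact Or.inl ((hs w (hC.mem (hv p) hw)).1 h)
      · exact Or.inr ((hd w (hC.mem (hv p) hw)).1 h)
    · rintro (rfl | rfl)
      · exact hz1p
      · exact hz2p
  · intro hp
    have h1 : ({v a} : ZFSet) ∈ v p := by rw [hp]; exact mem_zpair.2 (Or.inl rfl)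
    have h2 : ({v a, v b} : ZFSet) ∈ v p := by rw [hp]; exact mem_zpair.2 (Or.inr rfl)
    refine ⟨?_, ⟨{v a}, hC.mem (hv p) h1, h1, (hs _ (hC.mem (hv p) h1)).2 rfl⟩,
      ⟨{v a, v b}, hC.mem (hv p) h2, h2, (hd _ (hC.mem (hv p) h2)).2 rfl⟩⟩
    intro z hz hzp
    rw [hp, mem_zpair] at hzp
    rcases hzp with rfl | rfl
    · exact Or.inl ((hs _ hz).2 rfl)
    · exact Or.inr ((hd _ hz).2 rfl)

/-- `pair (v a) (v b) ∈ v g`. -/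
def pairMemFml (a b g : Fin n) : Fml n :=
  .ex (.and (.mem (Fin.last n) g.castSucc) (pairFml (Fin.last n) a.castSucc b.castSucc))

lemma realize_pairMemFml (hC : TransClass C) {a b g : Fin n} {v : Fin n → ZFSet}
    (hv : ∀ i, v i ∈ C) :
    Realize C (pairMemFml a b g) v ↔ ZFSet.pair (v a) (v b) ∈ v g := by
  simp only [pairMemFml, realize_ex, realize_and, realize_mem, Fin.snoc_last, Fin.snoc_castSucc]
  constructor
  · rintro ⟨p, hpC, hpg, hp⟩
    rw [realize_pairFml hC (hvSnoc hv hpC), Fin.snoc_last, Fin.snoc_castSucc,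
      Fin.snoc_castSucc] at hp
    rwa [hp] at hpg
  · intro h
    have hpC : ZFSet.pair (v a) (v b) ∈ C := hC.mem (hv g) h
    refine ⟨ZFSet.pair (v a) (v b), hpC, h, ?_⟩
    rw [realize_pairFml hC (hvSnoc hv hpC), Fin.snoc_last, Fin.snoc_castSucc, Fin.snoc_castSucc]

/-- `v x` is transitive. -/
def transFml (x : Fin n) : Fml n :=
  Fml.all (Fml.imp (.mem (Fin.last n) x.castSucc) (subFml (Fin.last n) x.castSucc))

lemma realize_transFml (hC : TransClass C) {x : Fin n} {v : Fin n → ZFSet} (hx : v x ∈ C) :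
    Realize C (transFml x) v ↔ ZFSet.IsTransitive (v x) := by
  simp only [transFml, realize_all, realize_imp, realize_mem, Fin.snoc_last, Fin.snoc_castSucc]
  constructor
  · intro h y hy
    have hyC : y ∈ C := hC.mem hx hy
    have := h y hyC hy
    rwa [realize_subFml hC (by rwa [Fin.snoc_last]), Fin.snoc_last, Fin.snoc_castSucc] at this
  · intro h y hyC hy
    rw [realize_subFml hC (by rwa [Fin.snoc_last]), Fin.snoc_last, Fin.snoc_castSucc]
    exact h.subset_of_mem hy

/-- `v x` is an ordinal (a transitive set of transitive sets). -/
def ordFml (x : Fin n) : Fml n :=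
  .and (transFml x)
    (Fml.all (Fml.imp (.mem (Fin.last n) x.castSucc) (transFml (Fin.last n))))

lemma realize_ordFml (hC : TransClass C) {x : Fin n} {v : Fin n → ZFSet} (hx : v x ∈ C) :
    Realize C (ordFml x) v ↔ IsOrd (v x) := by
  simp only [ordFml, realize_and, realize_all, realize_imp, realize_mem,
    Fin.snoc_last, Fin.snoc_castSucc]
  rw [realize_transFml hC hx]
  constructor
  · intro ⟨h1, h2⟩
    refine ⟨h1, fun y hy => ?_⟩
    have hyC : y ∈ C := hC.mem hx hy
    have := h2 y hyC hy
    rwa [realize_transFml hC (by rwa [Fin.snoc_last]), Fin.snoc_last] at this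
  · intro ⟨h1, h2⟩
    refine ⟨h1, fun y hyC hy => ?_⟩
    rw [realize_transFml hC (by rwa [Fin.snoc_last]), Fin.snoc_last]
    exact h2 y hy

/-- every member of `v x` is `∅` or a successor of a member of `v x`. -/
def natBodyFml (x : Fin n) : Fml n :=
  Fml.all (Fml.imp (.mem (Fin.last n) x.castSucc)
    (Fml.or (emptyFml (Fin.last n))
      (.ex (.and (.mem (Fin.last (n+1)) x.castSucc.castSucc)
        (insFml ((Fin.last n).castSucc) (Fin.last (n+1)) (Fin.last (n+1)))))))

lemma realize_natBodyFml (hC : TransClass C) {x : Fin n} {v : Fin n → ZFSet} (hx : v x ∈ C) :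
    Realize C (natBodyFml x) v ↔ ∀ y ∈ v x, y = ∅ ∨ ∃ z ∈ v x, y = insert z z := by
  simp only [natBodyFml, realize_all, realize_imp, realize_or, realize_ex, realize_and,
    realize_mem, Fin.snoc_last, Fin.snoc_castSucc]
  constructor
  · intro h y hy
    have hyC : y ∈ C := hC.mem hx hy
    rcases h y hyC hy with h' | ⟨z, hzC, hzx, h'⟩
    · rw [realize_emptyFml hC (by rwa [Fin.snoc_last]), Fin.snoc_last] at h'
      exact Or.inl h'
    · rw [realize_insFml hC (by rw [Fin.snoc_castSucc, Fin.snoc_last]; exact hyC)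
        (by rwa [Fin.snoc_last]) (by rwa [Fin.snoc_last])] at h'
      simp only [Fin.snoc_last, Fin.snoc_castSucc] at h'
      exact Or.inr ⟨z, hzx, h'⟩
  · intro h y hyC hy
    rcases h y hy with rfl | ⟨z, hzx, hz⟩
    · left
      rw [realize_emptyFml hC (by rwa [Fin.snoc_last]), Fin.snoc_last]
    · right
      have hzC : z ∈ C := hC.mem hx hzx
      refine ⟨z, hzC, hzx, ?_⟩
      rw [realize_insFml hC (by rw [Fin.snoc_castSucc, Fin.snoc_last]; exact hyC)
        (by rwa [Fin.snoc_last]) (by rwa [Fin.snoc_last])]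
      simp only [Fin.snoc_last, Fin.snoc_castSucc]
      exact hz

/-- `∃ β (β ∈ v A ∧ β ∈ v K ∧ v a ∈ β)`. -/
def mem3Fml (A K a : Fin n) : Fml n :=
  .ex (.and (.mem (Fin.last n) A.castSucc)
    (.and (.mem (Fin.last n) K.castSucc) (.mem a.castSucc (Fin.last n))))

lemma realize_mem3Fml (hC : TransClass C) {A K a : Fin n} {v : Fin n → ZFSet} (hA : v A ∈ C) :
    Realize C (mem3Fml A K a) v ↔ ∃ β, β ∈ v A ∧ β ∈ v K ∧ v a ∈ β := by
  simp only [mem3Fml, realize_ex, realize_and, realize_mem, Fin.snoc_last, Fin.snoc_castSucc]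
  constructor
  · rintro ⟨β, _, h⟩; exact ⟨β, h⟩
  · rintro ⟨β, h⟩; exact ⟨β, hC.mem hA h.1, h⟩

/-- `∀ x ∈ v A, x ∈ v S → x = v a`. -/
def intFml (A S a : Fin n) : Fml n :=
  Fml.all (Fml.imp (.mem (Fin.last n) A.castSucc)
    (Fml.imp (.mem (Fin.last n) S.castSucc) (.eq (Fin.last n) a.castSucc)))

lemma realize_intFml (hC : TransClass C) {A S a : Fin n} {v : Fin n → ZFSet} (hA : v A ∈ C) :
    Realize C (intFml A S a) v ↔ ∀ x ∈ v A, x ∈ v S → x = v a := by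
  simp only [intFml, realize_all, realize_imp, realize_eq, realize_mem,
    Fin.snoc_last, Fin.snoc_castSucc]
  constructor
  · intro h x hx hx'; exact h x (hC.mem hA hx) hx hx'
  · intro h x _ hx hx'; exact h x hx hx'

/-- `∀ β ∈ v K, ∃ x y (pair x y ∈ v g ∧ x ∈ v D ∧ y ∉ β)`, quantifiers relativized. -/
def unbFml (g D K : Fin n) : Fml n :=
  Fml.all (Fml.imp (.mem (Fin.last n) K.castSucc)
    (.ex (.ex (.and
      (pairMemFml (Fin.last (n+1)).castSucc (Fin.last (n+2))
        (g.castSucc.castSucc.castSucc))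
      (.and (.mem (Fin.last (n+1)).castSucc (D.castSucc.castSucc.castSucc))
        (.not (.mem (Fin.last (n+2)) ((Fin.last n).castSucc.castSucc))))))))

lemma realize_unbFml (hC : TransClass C) {g D K : Fin n} {v : Fin n → ZFSet}
    (hv : ∀ i, v i ∈ C) :
    Realize C (unbFml g D K) v ↔
      ∀ β ∈ C, β ∈ v K → ∃ x ∈ C, ∃ y ∈ C,
        ZFSet.pair x y ∈ v g ∧ x ∈ v D ∧ y ∉ β := by
  simp only [unbFml, realize_all, realize_imp, realize_ex, realize_and, realize_not, realize_mem,
    Fin.snoc_last, Fin.snoc_castSucc]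
  refine forall_congr' fun β => forall_congr' fun hβ => imp_congr_right fun _ => ?_
  refine exists_congr fun x => and_congr_right fun hx => exists_congr fun y =>
    and_congr_right fun hy => ?_
  rw [realize_pairMemFml hC (hvSnoc (hvSnoc (hvSnoc hv hβ) hx) hy)]
  simp only [Fin.snoc_last, Fin.snoc_castSucc]

/-- functionality of `v g`: `∀ x y y', pair x y ∈ v g → pair x y' ∈ v g → y = y'`,
relativized. -/
def funcFml (g : Fin n) : Fml n :=
  Fml.all (Fml.all (Fml.all
    (Fml.imp (pairMemFml ((Fin.last n).castSucc.castSucc) ((Fin.last (n+1)).castSucc)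
        (g.castSucc.castSucc.castSucc))
      (Fml.imp (pairMemFml ((Fin.last n).castSucc.castSucc) (Fin.last (n+2))
          (g.castSucc.castSucc.castSucc))
        (.eq ((Fin.last (n+1)).castSucc) (Fin.last (n+2)))))))

lemma realize_funcFml (hC : TransClass C) {g : Fin n} {v : Fin n → ZFSet}
    (hv : ∀ i, v i ∈ C) :
    Realize C (funcFml g) v ↔
      ∀ x ∈ C, ∀ y ∈ C, ∀ y' ∈ C,
        ZFSet.pair x y ∈ v g → ZFSet.pair x y' ∈ v g → y = y' := by
  simp only [funcFml, realize_all, realize_imp, realize_eq,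
    Fin.snoc_last, Fin.snoc_castSucc]
  refine forall_congr' fun x => forall_congr' fun hx => forall_congr' fun y =>
    forall_congr' fun hy => forall_congr' fun y' => forall_congr' fun hy' => ?_
  rw [realize_pairMemFml hC (hvSnoc (hvSnoc (hvSnoc hv hx) hy) hy'),
    realize_pairMemFml hC (hvSnoc (hvSnoc (hvSnoc hv hx) hy) hy')]
  simp only [Fin.snoc_last, Fin.snoc_castSucc]

/-- `∀ ξ ∈ v K, ∃ z, pair z ξ ∈ v s`, relativized. -/
def surjFml (s K : Fin n) : Fml n :=
  Fml.all (Fml.imp (.mem (Fin.last n) K.castSucc)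
    (.ex (pairMemFml (Fin.last (n+1)) ((Fin.last n).castSucc) (s.castSucc.castSucc))))

lemma realize_surjFml (hC : TransClass C) {s K : Fin n} {v : Fin n → ZFSet}
    (hv : ∀ i, v i ∈ C) :
    Realize C (surjFml s K) v ↔
      ∀ ξ ∈ C, ξ ∈ v K → ∃ z ∈ C, ZFSet.pair z ξ ∈ v s := by
  simp only [surjFml, realize_all, realize_imp, realize_ex, realize_mem,
    Fin.snoc_last, Fin.snoc_castSucc]
  refine forall_congr' fun ξ => forall_congr' fun hξ => imp_congr_right fun _ =>
    exists_congr fun z => and_congr_right fun hz => ?_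
  rw [realize_pairMemFml hC (hvSnoc (hvSnoc hv hξ) hz)]
  simp only [Fin.snoc_last, Fin.snoc_castSucc]

/-- `∀ x y, pair x y ∈ v s → x ∈ v D`, relativized. -/
def domFml (s D : Fin n) : Fml n :=
  Fml.all (Fml.all
    (Fml.imp (pairMemFml ((Fin.last n).castSucc) (Fin.last (n+1)) (s.castSucc.castSucc))
      (.mem ((Fin.last n).castSucc) (D.castSucc.castSucc))))

lemma realize_domFml (hC : TransClass C) {s D : Fin n} {v : Fin n → ZFSet}
    (hv : ∀ i, v i ∈ C) :
    Realize C (domFml s D) v ↔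
      ∀ x ∈ C, ∀ y ∈ C, ZFSet.pair x y ∈ v s → x ∈ v D := by
  simp only [domFml, realize_all, realize_imp, realize_mem, Fin.snoc_last, Fin.snoc_castSucc]
  refine forall_congr' fun x => forall_congr' fun hx => forall_congr' fun y =>
    forall_congr' fun hy => ?_
  rw [realize_pairMemFml hC (hvSnoc (hvSnoc hv hx) hy)]
  simp only [Fin.snoc_last, Fin.snoc_castSucc]

/-- `∀ y, y ∈ v D ↔ y ⊆ v a`, relativized. -/
def powFml (D a : Fin n) : Fml n :=
  Fml.all (Fml.iff (.mem (Fin.last n) D.castSucc) (subFml (Fin.last n) a.castSucc))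

lemma realize_powFml (hC : TransClass C) {D a : Fin n} {v : Fin n → ZFSet} :
    Realize C (powFml D a) v ↔ ∀ y ∈ C, (y ∈ v D ↔ y ⊆ v a) := by
  simp only [powFml, realize_all, realize_iff, realize_mem, Fin.snoc_last, Fin.snoc_castSucc]
  refine forall_congr' fun y => forall_congr' fun hy => iff_congr Iff.rfl ?_
  rw [realize_subFml hC (by rwa [Fin.snoc_last]), Fin.snoc_last, Fin.snoc_castSucc]

end Formulas

/-! #### Elementary embedding lemmas -/

section Embedding

open Fml

universe u

variable {M : Set ZFSet.{u}}

/-- Elementary embeddings of the (set-sized-universe) class `univ` into `M`,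
with matching universes. -/
abbrev EmbU (M : Set ZFSet.{u}) : Type (u+1) := ElemEmb.{u, u} Set.univ M

lemma ElemEmb.transfer (j : EmbU M) {n} (φ : Fml n) (v : Fin n → ZFSet) :
    Realize Set.univ φ v ↔ Realize M φ (fun i => j.toFun (v i)) :=
  j.elem φ v (fun _ => Set.mem_univ _)

lemma ElemEmb.transfer1 (j : EmbU M) (φ : Fml 1) (x : ZFSet) :
    Realize Set.univ φ ![x] ↔ Realize M φ ![j.toFun x] := by
  have h := j.transfer φ ![x]
  have e : (fun i => j.toFun (![x] i)) = ![j.toFun x] := by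
    funext i; fin_cases i <;> simp
  rwa [e] at h

lemma ElemEmb.transfer2 (j : EmbU M) (φ : Fml 2) (x y : ZFSet) :
    Realize Set.univ φ ![x, y] ↔ Realize M φ ![j.toFun x, j.toFun y] := by
  have h := j.transfer φ ![x, y]
  have e : (fun i => j.toFun (![x, y] i)) = ![j.toFun x, j.toFun y] := by
    funext i; fin_cases i <;> simp
  rwa [e] at h

lemma ElemEmb.transfer3 (j : EmbU M) (φ : Fml 3) (x y z : ZFSet) :
    Realize Set.univ φ ![x, y, z] ↔ Realize M φ ![j.toFun x, j.toFun y, j.toFun z] := by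
  have h := j.transfer φ ![x, y, z]
  have e : (fun i => j.toFun (![x, y, z] i)) = ![j.toFun x, j.toFun y, j.toFun z] := by
    funext i; fin_cases i <;> simp
  rwa [e] at h

lemma ElemEmb.maps' (j : EmbU M) (x : ZFSet) : j.toFun x ∈ M :=
  j.maps x (Set.mem_univ x)

lemma univ_mem (x : ZFSet) : x ∈ (Set.univ : Set ZFSet) := Set.mem_univ x

lemma jmem (j : EmbU M) {x y : ZFSet} : x ∈ y ↔ j.toFun x ∈ j.toFun y := by
  have h := j.transfer2 (.mem 0 1) x y
  rw [realize_mem, realize_mem] at h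
  simpa using h

lemma jeq (j : EmbU M) {x y : ZFSet} : x = y ↔ j.toFun x = j.toFun y := by
  have h := j.transfer2 (.eq 0 1) x y
  rw [realize_eq, realize_eq] at h
  simpa using h

lemma jsub (hM : TransClass M) (j : EmbU M) {x y : ZFSet} (h : x ⊆ y) : j.toFun x ⊆ j.toFun y := by
  have h1 := j.transfer2 (subFml 0 1) x y
  rw [realize_subFml transClass_univ (univ_mem _),
    realize_subFml hM (by simpa using j.maps' x)] at h1
  simpa using h1.1 (by simpa using h)

lemma jempty (hM : TransClass M) (j : EmbU M) : j.toFun ∅ = ∅ := by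
  have h1 := j.transfer1 (emptyFml 0) ∅
  rw [realize_emptyFml transClass_univ (univ_mem _),
    realize_emptyFml hM (by simpa using j.maps' ∅)] at h1
  simpa using h1.1 rfl

lemma jinsert (hM : TransClass M) (j : EmbU M) {a b : ZFSet} : j.toFun (insert a b) = insert (j.toFun a) (j.toFun b) := by
  have h1 := j.transfer3 (insFml 0 1 2) (insert a b) a b
  rw [realize_insFml transClass_univ (univ_mem _) (univ_mem _) (univ_mem _),
    realize_insFml hM (by simpa using j.maps' _) (by simpa using j.maps' a)
      (by simpa using j.maps' b)] at h1
  simpa using h1.1 (by simp)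

lemma jsingleton (hM : TransClass M) (j : EmbU M) {a : ZFSet} : j.toFun {a} = {j.toFun a} := by
  have h1 : ({a} : ZFSet) = insert a ∅ := rfl
  have h2 : ({j.toFun a} : ZFSet) = insert (j.toFun a) ∅ := rfl
  rw [h1, h2, jinsert hM j, jempty hM j]

lemma jpair (hM : TransClass M) (j : EmbU M) {a b : ZFSet} : j.toFun (ZFSet.pair a b) = ZFSet.pair (j.toFun a) (j.toFun b) := by
  have h1 : ZFSet.pair a b = insert {a} (insert {a, b} ∅) := rfl
  have h2 : ({a, b} : ZFSet) = insert a (insert b ∅) := rfl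
  have h3 : ZFSet.pair (j.toFun a) (j.toFun b) =
      insert {j.toFun a} (insert {j.toFun a, j.toFun b} ∅) := rfl
  have h4 : ({j.toFun a, j.toFun b} : ZFSet) = insert (j.toFun a) (insert (j.toFun b) ∅) := rfl
  rw [h1, h3, h4, h2]
  rw [jinsert hM j, jinsert hM j, jinsert hM j, jinsert hM j, jempty hM j, jsingleton hM j]

lemma jord (hM : TransClass M) (j : EmbU M) {x : ZFSet} (hx : IsOrd x) : IsOrd (j.toFun x) := by
  have h1 := j.transfer1 (ordFml 0) x
  rw [realize_ordFml transClass_univ (univ_mem _),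
    realize_ordFml hM (by simpa using j.maps' x)] at h1
  simpa using h1.1 (by simpa using hx)

lemma joLe (hM : TransClass M) (j : EmbU M) {x : ZFSet} (hx : IsOrd x) : oLe x (j.toFun x) := by
  induction x using ZFSet.inductionOn with
  | _ x IH =>
    have hsub : x ⊆ j.toFun x := by
      intro η hη
      have h1 : oLe η (j.toFun η) := IH η hη (hx.mem hη)
      have h2 : j.toFun η ∈ j.toFun x := (jmem j).1 hη
      exact mem_of_oLe_of_mem h1 h2 (jord hM j hx)
    rcases eq_or_ne x (j.toFun x) with h | h
    · exact Or.inr h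
    · exact Or.inl (IsOrd.mem_of_subset_ne hx (jord hM j hx) hsub h)

lemma jordM (hM : TransClass M) (j : EmbU M) {x : ZFSet} (hx : IsOrd x) : x ∈ M := by
  rcases joLe hM j hx with h | h
  · exact hM.mem (j.maps' x) h
  · rw [h]; exact j.maps' x

lemma crit_mem_jcrit (hM : TransClass M) (j : EmbU M) {κ : ZFSet} (hc : IsCrit j κ) : κ ∈ j.toFun κ := by
  rcases joLe hM j hc.1 with h | h
  · exact h
  · exact absurd h.symm hc.2.1

lemma crit_omega_mem (hM : TransClass M) (j : EmbU M) {κ : ZFSet} (hc : IsCrit j κ) : ZFSet.omega ∈ κ := by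
  rcases ord_trich κ hc.1 ZFSet.omega isOrd_omega with h | h | h
  · obtain ⟨n, hn⟩ := mem_omega_iff.1 h
    exfalso
    cases n with
    | zero => exact hc.2.1 (by rw [hn]; exact jempty hM j)
    | succ m =>
      have hm : natZ m ∈ κ := by rw [hn]; exact ZFSet.mem_insert _ _
      have hfix : j.toFun (natZ m) = natZ m := hc.2.2 _ hm
      exact hc.2.1 (by rw [hn, show natZ (m+1) = insert (natZ m) (natZ m) from rfl,
        jinsert hM j, hfix])
  · exfalso
    have hsub1 : ZFSet.omega ⊆ j.toFun ZFSet.omega := by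
      intro z hz
      have hzκ : z ∈ κ := by rw [h]; exact hz
      have h2 := (jmem j).1 hz
      rwa [hc.2.2 z hzκ] at h2
    have hbody : ∀ y ∈ j.toFun ZFSet.omega, y = ∅ ∨ ∃ z ∈ j.toFun ZFSet.omega,
        y = insert z z := by
      have h1 := j.transfer1 (natBodyFml 0) ZFSet.omega
      rw [realize_natBodyFml transClass_univ (univ_mem _),
        realize_natBodyFml hM (by simpa using j.maps' ZFSet.omega)] at h1
      have h2 : ∀ y ∈ ZFSet.omega, y = ∅ ∨ ∃ z ∈ ZFSet.omega, y = insert z z := by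
        intro y hy
        obtain ⟨n, rfl⟩ := mem_omega_iff.1 hy
        cases n with
        | zero => exact Or.inl rfl
        | succ m => exact Or.inr ⟨natZ m, natZ_mem_omega m, rfl⟩
      simpa using h1.1 (by simpa using h2)
    have hsub2 : j.toFun ZFSet.omega ⊆ ZFSet.omega := by
      intro y
      induction y using ZFSet.inductionOn with
      | _ y IH =>
        intro hy
        rcases hbody y hy with rfl | ⟨z, hz, rfl⟩
        · exact ZFSet.omega_zero
        · exact ZFSet.omega_succ (IH z (ZFSet.mem_insert z z) hz)
    exact hc.2.1 (by rw [h]; exact antisymm hsub2 hsub1)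
  · exact h

lemma crit_fix_subset (hM : TransClass M) (j : EmbU M) {κ : ZFSet} (hc : IsCrit j κ) {z α : ZFSet} (hzα : z ⊆ α) (hακ : α ∈ κ) : j.toFun z = z := by
  have hjα : j.toFun α = α := hc.2.2 _ hακ
  have h1 : j.toFun z ⊆ α := by
    have := jsub hM j hzα
    rwa [hjα] at this
  apply ZFSet.ext
  intro w
  constructor
  · intro hw
    have hwα : w ∈ α := h1 hw
    have hwκ : w ∈ κ := hc.1.1.mem_trans hwα hακ
    have := (jmem (x := w) (y := z) j).2
    rw [hc.2.2 w hwκ] at this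
    exact this hw
  · intro hw
    have hwα : w ∈ α := hzα hw
    have hwκ : w ∈ κ := hc.1.1.mem_trans hwα hακ
    have := (jmem (x := w) (y := z) j).1 hw
    rwa [hc.2.2 w hwκ] at this

end Embedding

/-! #### Graphs of functions as `ZFSet`s -/

section Graphs

attribute [local instance] Classical.allZFSetDefinable
attribute [local instance] Classical.propDecidable

/-- The graph of `F` restricted to `d`, as a `ZFSet`. -/
noncomputable def graphOf (F : ZFSet → ZFSet) (d : ZFSet) : ZFSet :=
  ZFSet.image (fun z => z.pair (F z)) d

lemma mem_graphOf {F : ZFSet → ZFSet} {d p : ZFSet} :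
    p ∈ graphOf F d ↔ ∃ z ∈ d, z.pair (F z) = p := ZFSet.mem_image

lemma pair_mem_graphOf {F : ZFSet → ZFSet} {d x y : ZFSet} :
    x.pair y ∈ graphOf F d ↔ x ∈ d ∧ y = F x := by
  rw [mem_graphOf]
  constructor
  · rintro ⟨z, hz, hp⟩
    obtain ⟨rfl, rfl⟩ := ZFSet.pair_injective hp.symm
    exact ⟨hz, rfl⟩
  · rintro ⟨hx, rfl⟩
    exact ⟨x, hx, rfl⟩

lemma isFuncOn_graphOf {F : ZFSet → ZFSet} {d : ZFSet} : IsFuncOn d (graphOf F d) := by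
  constructor
  · intro p hp
    obtain ⟨z, hz, hp⟩ := mem_graphOf.1 hp
    exact ⟨z, F z, hz, hp.symm⟩
  · intro a ha
    refine ⟨F a, pair_mem_graphOf.2 ⟨ha, rfl⟩, ?_⟩
    intro y hy
    exact (pair_mem_graphOf.1 hy).2

lemma mapsInto_graphOf {F : ZFSet → ZFSet} {d b : ZFSet} (h : ∀ z ∈ d, F z ∈ b) :
    MapsInto (graphOf F d) b := by
  intro x y hxy
  obtain ⟨hx, rfl⟩ := pair_mem_graphOf.1 hxy
  exact h x hx

lemma injFun_graphOf {F : ZFSet → ZFSet} {d : ZFSet}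
    (h : ∀ z ∈ d, ∀ z' ∈ d, F z = F z' → z = z') : InjFun (graphOf F d) := by
  intro x x' y hx hx'
  obtain ⟨hxd, rfl⟩ := pair_mem_graphOf.1 hx
  obtain ⟨hx'd, he⟩ := pair_mem_graphOf.1 hx'
  exact h x hxd x' hx'd he

lemma setLeIn_of_inj {d b : ZFSet} (F : ZFSet → ZFSet) (hmaps : ∀ z ∈ d, F z ∈ b)
    (hinj : ∀ z ∈ d, ∀ z' ∈ d, F z = F z' → z = z') : SetLeIn Set.univ d b :=
  ⟨graphOf F d, Set.mem_univ _, isFuncOn_graphOf, mapsInto_graphOf hmaps, injFun_graphOf hinj⟩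

lemma setLeIn_of_card {d b : ZFSet} (h : Cardinal.mk d.toSet ≤ Cardinal.mk b.toSet) :
    SetLeIn Set.univ d b := by
  obtain ⟨f⟩ := h
  refine setLeIn_of_inj (fun z => if hz : z ∈ d then (f ⟨z, hz⟩ : ZFSet) else ∅) ?_ ?_
  · intro z hz
    show (if hz : z ∈ d then (↑(f ⟨z, hz⟩) : ZFSet) else ∅) ∈ b
    rw [dif_pos hz]
    exact (f ⟨z, hz⟩).2
  · intro z hz z' hz' he
    have he' : (if hz : z ∈ d then (↑(f ⟨z, hz⟩) : ZFSet) else ∅) =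
        (if hz' : z' ∈ d then (↑(f ⟨z', hz'⟩) : ZFSet) else ∅) := he
    rw [dif_pos hz, dif_pos hz'] at he'
    exact congrArg Subtype.val (f.injective (Subtype.ext he'))

/-- An injective class function into `ZFSet`s gives an injection of `toSet` types. -/
lemma card_le_of_inj {d b : ZFSet} (F : ZFSet → ZFSet) (hmaps : ∀ z ∈ d, F z ∈ b)
    (hinj : ∀ z ∈ d, ∀ z' ∈ d, F z = F z' → z = z') :
    Cardinal.mk d.toSet ≤ Cardinal.mk b.toSet := by
  refine ⟨⟨fun z => ⟨F z.1, hmaps z.1 z.2⟩, ?_⟩⟩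
  rintro ⟨z, hz⟩ ⟨z', hz'⟩ he
  exact Subtype.ext (hinj z hz z' hz' (congrArg Subtype.val he))

end Graphs

/-! #### From strong compactness for `A` to plain strong compactness -/

section MainLemmas

attribute [local instance] Classical.allZFSetDefinable
attribute [local instance] Classical.propDecidable

lemma lamSCIn_of_for {κ lam A : ZFSet} (h : LamSCForIn Set.univ κ lam A) :
    LamSCIn Set.univ κ lam := by
  obtain ⟨M, hMs, hM, j, hc, hlt, hcov, -⟩ := h
  refine ⟨M, hMs, hM, j, hc, hlt, ?_⟩
  set X := ZFSet.image j.toFun lam with hX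
  have hmemX : ∀ w, w ∈ X ↔ ∃ ξ ∈ lam, j.toFun ξ = w := fun w => ZFSet.mem_image
  have hXM : X.toSet ⊆ M := by
    intro w hw
    change w ∈ X at hw
    obtain ⟨ξ, -, rfl⟩ := (hmemX w).1 hw
    exact j.maps' ξ
  have hle : SetLeIn Set.univ X lam := by
    refine setLeIn_of_inj
      (fun w => if hw : ∃ ξ ∈ lam, j.toFun ξ = w then hw.choose else ∅) ?_ ?_
    · intro w hw
      rw [hmemX] at hw
      show (if hw : ∃ ξ ∈ lam, j.toFun ξ = w then hw.choose else ∅) ∈ lam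
      rw [dif_pos hw]
      obtain ⟨h1, -⟩ := hw.choose_spec
      exact h1
    · intro w hw w' hw' he
      rw [hmemX] at hw hw'
      have he' : (if hw : ∃ ξ ∈ lam, j.toFun ξ = w then hw.choose else ∅) =
          (if hw' : ∃ ξ ∈ lam, j.toFun ξ = w' then hw'.choose else ∅) := he
      rw [dif_pos hw, dif_pos hw'] at he'
      rw [← hw.choose_spec.2, ← hw'.choose_spec.2, he']
  obtain ⟨s, hsM, hXs, hcard⟩ := hcov X (Set.mem_univ X) hXM hle
  exact ⟨s, hsM, fun a ha => hXs ((hmemX (j.toFun a)).2 ⟨a, ha, rfl⟩), hcard⟩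

/-- The adjusted set `A* = (A \ (α+1)) ∪ {α}`. -/
noncomputable def AstarSet (A α : ZFSet) : ZFSet := insert α (zdiff A (osucc α))

lemma mem_zdiff {a b x : ZFSet} : x ∈ zdiff a b ↔ x ∈ a ∧ x ∉ b := by
  simp [zdiff, ZFSet.mem_sep]

lemma mem_Astar {A α x : ZFSet} : x ∈ AstarSet A α ↔ x = α ∨ (x ∈ A ∧ x ∉ osucc α) := by
  simp [AstarSet, ZFSet.mem_insert_iff, mem_zdiff]

lemma master {δ A α : ZFSet} (hδord : IsOrd δ) (hsucc : ∀ β ∈ δ, osucc β ∈ δ)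
    (hA : A ⊆ δ) (hα : α ∈ δ)
    (hwsc : ∀ B : ZFSet, B ⊆ δ → ∃ κ, κ ∈ δ ∧ LtSCForIn Set.univ κ δ B) :
    ∃ κ, κ ∈ δ ∧ α ∈ κ ∧ LtSCForIn Set.univ κ δ (AstarSet A α) := by
  have hAsub : AstarSet A α ⊆ δ := by
    intro x hx
    rcases mem_Astar.1 hx with rfl | ⟨hxA, -⟩
    · exact hα
    · exact hA hxA
  obtain ⟨κ, hκδ, hκ⟩ := hwsc (AstarSet A α) hAsub
  refine ⟨κ, hκδ, ?_, hκ⟩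
  obtain ⟨M', -, hM', j', hc', -⟩ := hκ κ (oLe_refl κ) hκδ
  have hκord : IsOrd κ := hc'.1
  by_contra hνκ
  have hκα : oLe κ α := oLe_of_not_mem hκord (hδord.mem hα) hνκ
  have hlamδ : osucc α ∈ δ := hsucc α hα
  obtain ⟨M, -, hM, j, hc, hlt, -, hagr⟩ := hκ (osucc α) (Or.inl (oLe_mem_osucc hκα)) hlamδ
  have hαA : α ∈ AstarSet A α := mem_Astar.2 (Or.inl rfl)
  have hαlam : α ∈ osucc α := self_mem_osucc
  have hαjA : α ∈ j.toFun (AstarSet A α) := (hagr α hαlam).1 hαA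
  have hV : ∀ x ∈ AstarSet A α, x ∈ osucc α → x = α := by
    intro x hx hxs
    rcases mem_Astar.1 hx with rfl | ⟨-, hns⟩
    · rfl
    · exact absurd hxs hns
  have htr := j.transfer3 (intFml 0 1 2) (AstarSet A α) (osucc α) α
  rw [realize_intFml transClass_univ (univ_mem _),
    realize_intFml hM (by simpa using j.maps' _)] at htr
  simp only [Matrix.cons_val_zero, Matrix.cons_val_one, Matrix.head_cons,
    Matrix.cons_val_two, Matrix.tail_cons] at htr
  have hMside := htr.1 hV
  have hαord : IsOrd α := hδord.mem hα
  have hjsucc : j.toFun (osucc α) = osucc (j.toFun α) := jinsert hM j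
  have hαjs : α ∈ j.toFun (osucc α) := by
    rw [hjsucc]
    exact oLe_mem_osucc (joLe hM j hαord)
  have hjαα : α = j.toFun α := hMside α hαjA hαjs
  have hαjκ : α ∈ j.toFun κ := (jord hM j hc.1).1.mem_trans hαlam hlt
  refine hνκ ((jmem j).2 ?_)
  rw [← hjαα]
  exact hαjκ

end MainLemmas

/-! #### Main arguments -/

section FinalLemmas

universe v

attribute [local instance] Classical.allZFSetDefinable
attribute [local instance] Classical.propDecidable

variable {M : Set ZFSet.{v}}

lemma hvM3 (j : EmbU M) (x y z : ZFSet) :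
    ∀ i, (![j.toFun x, j.toFun y, j.toFun z] : Fin 3 → ZFSet) i ∈ M := by
  intro i
  fin_cases i
  · exact j.maps' x
  · exact j.maps' y
  · exact j.maps' z

lemma hvM2 (j : EmbU M) (x y : ZFSet) :
    ∀ i, (![j.toFun x, j.toFun y] : Fin 2 → ZFSet) i ∈ M := by
  intro i
  fin_cases i
  · exact j.maps' x
  · exact j.maps' y

lemma hvM1 (j : EmbU M) (x : ZFSet) :
    ∀ i, (![j.toFun x] : Fin 1 → ZFSet) i ∈ M := by
  intro i
  fin_cases i
  exact j.maps' x

/-- The inverse graph `{(F z, z) : z ∈ d}`. -/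
noncomputable def invGraphOf (F : ZFSet → ZFSet) (d : ZFSet) : ZFSet :=
  ZFSet.image (fun z => (F z).pair z) d

lemma pair_mem_invGraphOf {F : ZFSet → ZFSet} {d x y : ZFSet} :
    x.pair y ∈ invGraphOf F d ↔ y ∈ d ∧ x = F y := by
  rw [invGraphOf, ZFSet.mem_image]
  constructor
  · rintro ⟨z, hz, hp⟩
    obtain ⟨rfl, rfl⟩ := ZFSet.pair_injective hp.symm
    exact ⟨hz, rfl⟩
  · rintro ⟨hy, rfl⟩
    exact ⟨y, hy, rfl⟩

/-- Successor closure of a cardinal `δ > ω`. -/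
lemma osucc_mem_of_card {δ : ZFSet} (hcard : IsCardIn Set.univ δ) (hω : ZFSet.omega ∈ δ) :
    ∀ β ∈ δ, osucc β ∈ δ := by
  have hδord := hcard.1
  intro β hβ
  have hβord : IsOrd β := hδord.mem hβ
  have hsub : osucc β ⊆ δ := by
    intro z hz
    rcases mem_osucc.1 hz with rfl | hz
    · exact hβ
    · exact hδord.1.mem_trans hz hβ
  refine IsOrd.mem_of_subset_ne hβord.osucc hδord hsub (fun hEq => ?_)
  have hωβ : oLe ZFSet.omega β := by
    have hm : ZFSet.omega ∈ osucc β := by rw [hEq]; exact hω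
    exact (mem_osucc.1 hm).symm
  have hωsubβ : ZFSet.omega ⊆ β := hωβ.subset hβord
  have h0β : (∅ : ZFSet) ∈ β := hωsubβ ZFSet.omega_zero
  set F : ZFSet → ZFSet :=
    fun ξ => if ξ = β then ∅ else if ξ ∈ ZFSet.omega then insert ξ ξ else ξ with hF
  have hFval : ∀ ξ, F ξ = if ξ = β then ∅ else if ξ ∈ ZFSet.omega then insert ξ ξ else ξ :=
    fun ξ => rfl
  have hmaps : ∀ ξ ∈ δ, F ξ ∈ β := by
    intro ξ hξ
    rw [hFval]
    by_cases h1 : ξ = β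
    · rw [if_pos h1]; exact h0β
    · rw [if_neg h1]
      by_cases h2 : ξ ∈ ZFSet.omega
      · rw [if_pos h2]; exact hωsubβ (ZFSet.omega_succ h2)
      · rw [if_neg h2]
        have hm : ξ ∈ osucc β := by rw [hEq]; exact hξ
        rcases mem_osucc.1 hm with h3 | h3
        · exact absurd h3 h1
        · exact h3
  have hinj : ∀ ξ ∈ δ, ∀ ξ' ∈ δ, F ξ = F ξ' → ξ = ξ' := by
    have key : ∀ ξ ξ' : ZFSet, ξ = β → ξ' ≠ β → F ξ ≠ F ξ' := by
      intro ξ ξ' h1 h1'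
      rw [hFval, hFval, if_pos h1, if_neg h1']
      by_cases h2 : ξ' ∈ ZFSet.omega
      · rw [if_pos h2]
        intro he
        exact ZFSet.notMem_empty ξ' (he ▸ ZFSet.mem_insert ξ' ξ')
      · rw [if_neg h2]
        intro he
        exact h2 (he ▸ ZFSet.omega_zero)
    intro ξ _ ξ' _ he
    by_cases h1 : ξ = β <;> by_cases h1' : ξ' = β
    · rw [h1, h1']
    · exact absurd he (key ξ ξ' h1 h1')
    · exact absurd he.symm (key ξ' ξ h1' h1)
    · rw [hFval, hFval, if_neg h1, if_neg h1'] at he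
      by_cases h2 : ξ ∈ ZFSet.omega <;> by_cases h2' : ξ' ∈ ZFSet.omega
      · rw [if_pos h2, if_pos h2'] at he
        have m1 : ξ ∈ insert ξ' ξ' := he ▸ ZFSet.mem_insert ξ ξ
        have m2 : ξ' ∈ insert ξ ξ := he ▸ ZFSet.mem_insert ξ' ξ'
        rcases ZFSet.mem_insert_iff.1 m1 with h | h
        · exact h
        · rcases ZFSet.mem_insert_iff.1 m2 with h' | h'
          · exact h'.symm
          · exact absurd h (ZFSet.mem_asymm h')
      · rw [if_pos h2, if_neg h2'] at he
        exact absurd (he ▸ ZFSet.omega_succ h2) h2'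
      · rw [if_neg h2, if_pos h2'] at he
        exact absurd (he.symm ▸ ZFSet.omega_succ h2') h2
      · rwa [if_neg h2, if_neg h2'] at he
  have hβδ : β ∈ δ := hβ
  exact hcard.2 β hβδ (setLeIn_of_inj F hmaps hinj)

end FinalLemmas

section RegularArg

attribute [local instance] Classical.allZFSetDefinable
attribute [local instance] Classical.propDecidable

lemma regular_main {δ : ZFSet} (hδord : IsOrd δ) (hsucc : ∀ β ∈ δ, osucc β ∈ δ)
    (hwsc : ∀ B : ZFSet, B ⊆ δ → ∃ κ, κ ∈ δ ∧ LtSCForIn Set.univ κ δ B) :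
    ∀ α ∈ δ, ∀ f ∈ (Set.univ : Set ZFSet), IsFuncOn α f → MapsInto f δ →
      ∃ β ∈ δ, ∀ x y : ZFSet, x.pair y ∈ f → y ∈ β := by
  intro α hα f _ hfun hmapsf
  by_contra hno
  push_neg at hno
  set A := ZFSet.sep (fun y => ∃ x : ZFSet, x.pair y ∈ f) δ with hA
  have hmemA : ∀ y, y ∈ A ↔ y ∈ δ ∧ ∃ x : ZFSet, x.pair y ∈ f := fun y => ZFSet.mem_sep
  have hAδ : A ⊆ δ := fun y hy => ((hmemA y).1 hy).1
  have hAunb : ∀ β ∈ δ, ∃ y ∈ A, y ∉ β := by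
    intro β hβ
    obtain ⟨x, y, hxy, hyβ⟩ := hno β hβ
    exact ⟨y, (hmemA y).2 ⟨hmapsf x y hxy, x, hxy⟩, hyβ⟩
  obtain ⟨κ, hκδ, hακ, hκ⟩ := master hδord hsucc hAδ hα hwsc
  have hκord : IsOrd κ := by
    obtain ⟨M', -, -, j', hc', -⟩ := hκ κ (oLe_refl κ) hκδ
    exact hc'.1
  have hαord : IsOrd α := hδord.mem hα
  -- A* is unbounded in δ, avoiding `osucc α`
  have hstar : ∀ β ∈ δ, ∃ y, y ∈ AstarSet A α ∧ y ∈ A ∧ y ∉ β ∧ y ∉ osucc α := by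
    intro β hβ
    have hsα : osucc α ∈ δ := hsucc α hα
    obtain ⟨γ, hγδ, hβγ, hsαγ⟩ : ∃ γ, γ ∈ δ ∧ β ⊆ γ ∧ osucc α ⊆ γ := by
      rcases ord_trich β (hδord.mem hβ) (osucc α) (hδord.mem hsα) with h | h | h
      · exact ⟨osucc α, hsα, (hδord.mem hsα).1.subset_of_mem h, fun _ hz => hz⟩
      · exact ⟨osucc α, hsα, h ▸ fun _ hz => hz, fun _ hz => hz⟩
      · exact ⟨β, hβ, fun _ hz => hz, (hδord.mem hβ).1.subset_of_mem h⟩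
    obtain ⟨y, hyA, hyγ⟩ := hAunb γ hγδ
    exact ⟨y, mem_Astar.2 (Or.inr ⟨hyA, fun hy => hyγ (hsαγ hy)⟩), hyA,
      fun hy => hyγ (hβγ hy), fun hy => hyγ (hsαγ hy)⟩
  -- pullback: `A* ∩ κ` is unbounded in `κ`
  have hpull : ∀ η ∈ κ, ∃ y, y ∈ AstarSet A α ∧ y ∈ κ ∧ η ∈ y := by
    intro η hη
    obtain ⟨μ, hμAs, hμA, hμκ, -⟩ := hstar κ hκδ
    have hμδ : μ ∈ δ := hAδ hμA
    have hμord : IsOrd μ := hδord.mem hμδ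
    have hκμ : oLe κ μ := oLe_of_not_mem hκord hμord hμκ
    have hsμδ : osucc μ ∈ δ := hsucc μ hμδ
    obtain ⟨M, -, hM, j, hc, hlt, -, hagr⟩ := hκ (osucc μ) (Or.inl (oLe_mem_osucc hκμ)) hsμδ
    have hμjA : μ ∈ j.toFun (AstarSet A α) := (hagr μ self_mem_osucc).1 hμAs
    have hμjκ : μ ∈ j.toFun κ := (jord hM j hc.1).1.mem_trans self_mem_osucc hlt
    have htr := j.transfer3 (mem3Fml 0 1 2) (AstarSet A α) κ η
    rw [realize_mem3Fml transClass_univ (univ_mem _),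
      realize_mem3Fml hM (by simpa using j.maps' _)] at htr
    simp only [Matrix.cons_val_zero, Matrix.cons_val_one, Matrix.head_cons,
      Matrix.cons_val_two, Matrix.tail_cons] at htr
    have hjη : j.toFun η = η := hc.2.2 η hη
    refine htr.2 ⟨μ, hμjA, hμjκ, ?_⟩
    rw [hjη]
    exact (hκμ.subset hμord) hη
  -- the preimage selector for f
  set G : ZFSet → ZFSet :=
    fun y => if h : ∃ x : ZFSet, x.pair y ∈ f then h.choose else ∅ with hGdef
  have hGspec : ∀ y, (∃ x : ZFSet, x.pair y ∈ f) → (G y).pair y ∈ f ∧ G y ∈ α := by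
    intro y hy
    have h1 : (G y).pair y ∈ f := by
      show (if h : ∃ x : ZFSet, x.pair y ∈ f then h.choose else ∅).pair y ∈ f
      rw [dif_pos hy]
      exact hy.choose_spec
    refine ⟨h1, ?_⟩
    obtain ⟨a, b, haα, he⟩ := hfun.1 _ h1
    obtain ⟨rfl, rfl⟩ := ZFSet.pair_injective he
    exact haα
  set B := ZFSet.sep (fun y => y ∈ κ ∧ y ≠ α) (AstarSet A α) with hB
  have hmemB : ∀ y, y ∈ B ↔ y ∈ AstarSet A α ∧ y ∈ κ ∧ y ≠ α := fun y => ZFSet.mem_sep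
  have hBf : ∀ y ∈ B, ∃ x : ZFSet, x.pair y ∈ f := by
    intro y hy
    obtain ⟨hyAs, hyκ, hyne⟩ := (hmemB y).1 hy
    rcases mem_Astar.1 hyAs with rfl | ⟨hyA, -⟩
    · exact absurd rfl hyne
    · exact ((hmemA y).1 hyA).2
  have hBκ : ∀ y ∈ B, y ∈ κ := fun y hy => ((hmemB y).1 hy).2.1
  have hBunb : ∀ η ∈ κ, ∃ y ∈ B, η ∈ y := by
    intro η hη
    obtain ⟨θ, hθκ, hηθ, hαθ⟩ : ∃ θ, θ ∈ κ ∧ oLe η θ ∧ oLe α θ := by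
      rcases ord_trich η (hκord.mem hη) α hαord with h | h | h
      · exact ⟨α, hακ, Or.inl h, oLe_refl α⟩
      · exact ⟨α, hακ, Or.inr h, oLe_refl α⟩
      · exact ⟨η, hη, oLe_refl η, Or.inl h⟩
    obtain ⟨y, hyAs, hyκ, hθy⟩ := hpull θ hθκ
    have hyord : IsOrd y := hκord.mem hyκ
    have hαy : α ∈ y := mem_of_oLe_of_mem hαθ hθy hyord
    refine ⟨y, (hmemB y).2 ⟨hyAs, hyκ, fun h => ?_⟩, mem_of_oLe_of_mem hηθ hθy hyord⟩
    rw [h] at hαy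
    exact ZFSet.mem_irrefl α hαy
  -- the inverse function g : d → κ, d ⊆ α
  set g := invGraphOf G B with hg
  set d := ZFSet.image G B with hd
  have hmemd : ∀ x, x ∈ d ↔ ∃ y ∈ B, G y = x := fun x => ZFSet.mem_image
  have hdα : d ⊆ α := by
    intro x hx
    obtain ⟨y, hyB, rfl⟩ := (hmemd x).1 hx
    exact (hGspec y (hBf y hyB)).2
  have hgfunc : ∀ x y y' : ZFSet, x.pair y ∈ g → x.pair y' ∈ g → y = y' := by
    intro x y y' h1 h2
    obtain ⟨hyB, rfl⟩ := pair_mem_invGraphOf.1 h1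
    obtain ⟨hy'B, he⟩ := pair_mem_invGraphOf.1 h2
    have p1 : (G y).pair y ∈ f := (hGspec y (hBf y hyB)).1
    have p2 : (G y).pair y' ∈ f := by
      rw [he]; exact (hGspec y' (hBf y' hy'B)).1
    obtain ⟨b, -, hb⟩ := hfun.2 (G y) (hGspec y (hBf y hyB)).2
    rw [hb y p1, hb y' p2]
  have hgunb : ∀ β ∈ (Set.univ : Set ZFSet), β ∈ κ →
      ∃ x ∈ (Set.univ : Set ZFSet), ∃ y ∈ (Set.univ : Set ZFSet),
        ZFSet.pair x y ∈ g ∧ x ∈ d ∧ y ∉ β := by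
    intro β _ hβ
    obtain ⟨y, hyB, hβy⟩ := hBunb β hβ
    refine ⟨G y, Set.mem_univ _, y, Set.mem_univ _, ?_, ?_, ZFSet.mem_asymm hβy⟩
    · exact pair_mem_invGraphOf.2 ⟨hyB, rfl⟩
    · exact (hmemd (G y)).2 ⟨y, hyB, rfl⟩
  -- take an embedding at `lam := κ`
  obtain ⟨M, -, hM, j, hc, hlt, -, -⟩ := hκ κ (oLe_refl κ) hκδ
  have hκM : κ ∈ M := jordM hM j hκord
  have htr1 := j.transfer3 (unbFml 0 1 2) g d κ
  rw [realize_unbFml transClass_univ (fun _ => Set.mem_univ _),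
    realize_unbFml hM (hvM3 j g d κ)] at htr1
  simp only [Matrix.cons_val_zero, Matrix.cons_val_one, Matrix.head_cons,
    Matrix.cons_val_two, Matrix.tail_cons] at htr1
  obtain ⟨x, hxM, y, hyM, hpairj, hxjd, hyκ⟩ :=
    htr1.1 hgunb κ hκM (crit_mem_jcrit hM j hc)
  have hjdα : j.toFun d ⊆ α := by
    have h1 := jsub hM j hdα
    rwa [hc.2.2 α hακ] at h1
  have hxα : x ∈ α := hjdα hxjd
  have hxκ : x ∈ κ := hκord.1.mem_trans hxα hακ
  have hjx : j.toFun x = x := hc.2.2 x hxκ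
  have hxd : x ∈ d := by
    refine (jmem j).2 ?_
    rw [hjx]
    exact hxjd
  obtain ⟨y₀, hy₀B, hGy₀⟩ := (hmemd x).1 hxd
  have hy₀κ : y₀ ∈ κ := hBκ y₀ hy₀B
  have hjy₀ : j.toFun y₀ = y₀ := hc.2.2 y₀ hy₀κ
  have hgpair : x.pair y₀ ∈ g := pair_mem_invGraphOf.2 ⟨hy₀B, hGy₀.symm⟩
  have hjgpair : x.pair y₀ ∈ j.toFun g := by
    have h1 := (jmem j).1 hgpair
    rwa [jpair hM j, hjx, hjy₀] at h1
  have htr2 := j.transfer1 (funcFml 0) g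
  rw [realize_funcFml transClass_univ (fun _ => Set.mem_univ _),
    realize_funcFml hM (hvM1 j g)] at htr2
  simp only [Matrix.cons_val_zero] at htr2
  have hMfunc := htr2.1 (fun x' _ y' _ y'' _ h1 h2 => hgfunc x' y' y'' h1 h2)
  have hyy₀ : y = y₀ :=
    hMfunc x hxM y hyM y₀ (jordM hM j (hκord.mem hy₀κ)) hpairj hjgpair
  rw [hyy₀] at hyκ
  exact hyκ hy₀κ

end RegularArg

section StrongLimitArg

universe w

attribute [local instance] Classical.allZFSetDefinable
attribute [local instance] Classical.propDecidable

lemma powersetIn_mem {α y : ZFSet} : y ∈ powersetIn Set.univ α ↔ y ⊆ α := by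
  rw [powersetIn, ZFSet.mem_sep, ZFSet.mem_powerset]
  exact ⟨fun h => h.1, fun h => ⟨h, Set.mem_univ y⟩⟩

lemma stronglimit_main {M : Set ZFSet.{w}} {α κ : ZFSet} (hM : TransClass M) (j : EmbU M)
    (hc : IsCrit j κ) (hακ : α ∈ κ) :
    SetLeIn Set.univ (powersetIn Set.univ α) κ := by
  have hκord : IsOrd κ := hc.1
  set D := powersetIn Set.univ α with hD
  have hmemD : ∀ y, y ∈ D ↔ y ⊆ α := fun y => powersetIn_mem
  by_contra hnot
  have hcardle : Cardinal.mk κ.toSet ≤ Cardinal.mk D.toSet := by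
    rcases le_total (Cardinal.mk D.toSet) (Cardinal.mk κ.toSet) with h | h
    · exact absurd (setLeIn_of_card h) hnot
    · exact h
  obtain ⟨f⟩ := hcardle
  set F : ZFSet → ZFSet := fun ξ => if h : ξ ∈ κ then (f ⟨ξ, h⟩ : ZFSet) else ∅ with hF
  have hFD : ∀ ξ ∈ κ, F ξ ∈ D := by
    intro ξ hξ
    show (if h : ξ ∈ κ then (f ⟨ξ, h⟩ : ZFSet) else ∅) ∈ D
    rw [dif_pos hξ]
    have := (f ⟨ξ, hξ⟩).2
    exact this
  have hFinj : ∀ ξ ∈ κ, ∀ ξ' ∈ κ, F ξ = F ξ' → ξ = ξ' := by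
    intro ξ hξ ξ' hξ' he
    have he' : (if h : ξ ∈ κ then (f ⟨ξ, h⟩ : ZFSet) else ∅) =
        (if h : ξ' ∈ κ then (f ⟨ξ', h⟩ : ZFSet) else ∅) := he
    rw [dif_pos hξ, dif_pos hξ'] at he'
    exact congrArg Subtype.val (f.injective (Subtype.ext he'))
  set S : ZFSet → ZFSet := fun z => if h : ∃ ξ ∈ κ, F ξ = z then h.choose else ∅ with hS
  have h0κ : (∅ : ZFSet) ∈ κ := by
    refine IsOrd.mem_of_subset_ne isOrd_empty hκord (ZFSet.empty_subset κ) (fun h => ?_)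
    rw [← h] at hακ
    exact ZFSet.notMem_empty α hακ
  have hSκ : ∀ z, S z ∈ κ := by
    intro z
    show (if h : ∃ ξ ∈ κ, F ξ = z then h.choose else ∅) ∈ κ
    split_ifs with h
    · exact h.choose_spec.1
    · exact h0κ
  set s := graphOf S D with hs
  have hsurj : ∀ ξ ∈ (Set.univ : Set ZFSet), ξ ∈ κ →
      ∃ z ∈ (Set.univ : Set ZFSet), ZFSet.pair z ξ ∈ s := by
    intro ξ _ hξ
    have hex : ∃ ξ' ∈ κ, F ξ' = F ξ := ⟨ξ, hξ, rfl⟩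
    have hSF : S (F ξ) = ξ := by
      show (if h : ∃ ξ' ∈ κ, F ξ' = F ξ then h.choose else ∅) = ξ
      rw [dif_pos hex]
      exact hFinj _ hex.choose_spec.1 _ hξ hex.choose_spec.2
    exact ⟨F ξ, Set.mem_univ _, pair_mem_graphOf.2 ⟨hFD ξ hξ, hSF.symm⟩⟩
  have hdom : ∀ x ∈ (Set.univ : Set ZFSet), ∀ y ∈ (Set.univ : Set ZFSet),
      ZFSet.pair x y ∈ s → x ∈ D := by
    intro x _ y _ hxy
    exact (pair_mem_graphOf.1 hxy).1
  have hsfunc : ∀ x ∈ (Set.univ : Set ZFSet), ∀ y ∈ (Set.univ : Set ZFSet),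
      ∀ y' ∈ (Set.univ : Set ZFSet),
      ZFSet.pair x y ∈ s → ZFSet.pair x y' ∈ s → y = y' := by
    intro x _ y _ y' _ h1 h2
    rw [(pair_mem_graphOf.1 h1).2, (pair_mem_graphOf.1 h2).2]
  have hpow : ∀ y ∈ (Set.univ : Set ZFSet), (y ∈ D ↔ y ⊆ α) :=
    fun y _ => hmemD y
  -- transfers
  have htrP := j.transfer2 (powFml 0 1) D α
  rw [realize_powFml transClass_univ, realize_powFml hM] at htrP
  simp only [Matrix.cons_val_zero, Matrix.cons_val_one, Matrix.head_cons] at htrP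
  have hMpow := htrP.1 hpow
  have htrS := j.transfer2 (surjFml 0 1) s κ
  rw [realize_surjFml transClass_univ (fun _ => Set.mem_univ _),
    realize_surjFml hM (hvM2 j s κ)] at htrS
  simp only [Matrix.cons_val_zero, Matrix.cons_val_one, Matrix.head_cons] at htrS
  have hκM : κ ∈ M := jordM hM j hκord
  obtain ⟨z, hzM, hzpair⟩ := htrS.1 hsurj κ hκM (crit_mem_jcrit hM j hc)
  have htrD := j.transfer2 (domFml 0 1) s D
  rw [realize_domFml transClass_univ (fun _ => Set.mem_univ _),
    realize_domFml hM (hvM2 j s D)] at htrD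
  simp only [Matrix.cons_val_zero, Matrix.cons_val_one, Matrix.head_cons] at htrD
  have hzjD : z ∈ j.toFun D := htrD.1 hdom z hzM κ hκM hzpair
  have hzα : z ⊆ α := by
    have h1 := (hMpow z hzM).1 hzjD
    rwa [hc.2.2 α hακ] at h1
  have hzD : z ∈ D := (hmemD z).2 hzα
  have hjz : j.toFun z = z := crit_fix_subset hM j hc hzα hακ
  have hwκ : S z ∈ κ := hSκ z
  have hspair : ZFSet.pair z (S z) ∈ s := pair_mem_graphOf.2 ⟨hzD, rfl⟩
  have hjspair : ZFSet.pair z (S z) ∈ j.toFun s := by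
    have h1 := (jmem j).1 hspair
    rwa [jpair hM j, hjz, hc.2.2 (S z) hwκ] at h1
  have htrF := j.transfer1 (funcFml 0) s
  rw [realize_funcFml transClass_univ (fun _ => Set.mem_univ _),
    realize_funcFml hM (hvM1 j s)] at htrF
  simp only [Matrix.cons_val_zero] at htrF
  have hMfunc := htrF.1 hsfunc
  have : κ = S z :=
    hMfunc z hzM κ hκM (S z) (jordM hM j (hκord.mem hwκ)) hzpair hjspair
  rw [this] at hwκ
  exact ZFSet.mem_irrefl _ hwκ

end StrongLimitArg

end Aux


/-- **Proposition.**  A Woodin for strong compactness cardinal is an inaccessible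
limit of `<δ`-strongly compact cardinals. -/
theorem wsc_inaccessible_limit (δ : ZFSet) (h : WoodinSC δ) :
    Inaccessible δ ∧ ∀ α ∈ δ, ∃ κ : ZFSet, α ∈ κ ∧ κ ∈ δ ∧ LtSC κ δ := by
  obtain ⟨hcard, hwsc0⟩ := h
  have hδord : IsOrd δ := hcard.1
  have hwsc : ∀ B : ZFSet, B ⊆ δ → ∃ κ, κ ∈ δ ∧ LtSCForIn Set.univ κ δ B :=
    fun B hB => hwsc0 B (Set.mem_univ B) hB
  obtain ⟨κ₀, hκ₀δ, hsc₀⟩ := hwsc ∅ (ZFSet.empty_subset δ)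
  obtain ⟨M₀, -, hM₀, j₀, hc₀, -⟩ := hsc₀ κ₀ (oLe_refl κ₀) hκ₀δ
  have hωδ : ZFSet.omega ∈ δ := hδord.1.mem_trans (crit_omega_mem hM₀ j₀ hc₀) hκ₀δ
  have hsucc : ∀ β ∈ δ, osucc β ∈ δ := osucc_mem_of_card hcard hωδ
  have hlimSC : ∀ α ∈ δ, ∃ κ : ZFSet, α ∈ κ ∧ κ ∈ δ ∧ LtSC κ δ := by
    intro α hα
    obtain ⟨κ, hκδ, hακ, hκ⟩ := master hδord hsucc (ZFSet.empty_subset δ) hα hwsc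
    exact ⟨κ, hακ, hκδ, fun lam hl hld => lamSCIn_of_for (hκ lam hl hld)⟩
  refine ⟨⟨hωδ, hcard, ⟨hδord, regular_main hδord hsucc hwsc⟩, ⟨hcard, ?_⟩⟩, hlimSC⟩
  intro α hα
  obtain ⟨κ, hκδ, hακ, hκ⟩ := master hδord hsucc (ZFSet.empty_subset δ) hα hwsc
  obtain ⟨M, -, hM, j, hc, -⟩ := hκ κ (oLe_refl κ) hκδ
  exact ⟨κ, hκδ, stronglimit_main hM j hc hακ⟩

end WSC
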